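/- arXiv:2211.15247 — 7 statements merged into one kernel-verified Lean document; each statement's English description precedes it below -/
import Mathlib

section
/- Let G be a connected locally finite graph, let V_0 be a nonempty proper subset of the vertex set of G, let G_0 be the subgraph of G induced on V_0, and fix a vertex v_0 in V_0. For each v in V_0 let sigma_v^out denote the number of neighbours of v in G lying outside V_0. Then, with the sum taken in [0,infinity], sum over v in V_0 of sigma_v^{-1} * sigma_v^out * (sum over all finite walks omega from v_0 to v whose vertices all lie in V_0 of p_G(omega)) is at most 1. -/
open scoped ENNReal

variable {V : Type*}

/-- Weight of a walk: product over all vertices except the last of the inverse degree. -/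
noncomputable def wgt (G : SimpleGraph V) [G.LocallyFinite] {v u : V} (p : G.Walk v u) : ℝ≥0∞ :=
  (p.support.dropLast.map fun x => ((G.degree x : ℝ≥0∞))⁻¹).prod

namespace ExitProb

open SimpleGraph
open scoped Classical

variable (G : SimpleGraph V) [G.LocallyFinite] (V₀ : Set V)

/-- Weight of a reversed walk: product of inverse degrees over all vertices but the first. -/
noncomputable def wgt' {v u : V} (q : G.Walk v u) : ℝ≥0∞ :=
  (q.support.tail.map fun x => ((G.degree x : ℝ≥0∞))⁻¹).prod

/-- `wgt'` with an indicator of the walk staying inside `V₀`. -/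
noncomputable def gw {v u : V} (q : G.Walk v u) : ℝ≥0∞ :=
  if ∀ x ∈ q.support, x ∈ V₀ then wgt' G q else 0

lemma wgt_eq_wgt'_reverse {v u : V} (ω : G.Walk v u) : wgt G ω = wgt' G ω.reverse := by
  simp [wgt, wgt', Walk.support_reverse, List.tail_reverse,
    List.map_reverse, List.prod_reverse]

lemma wgt'_nil {v : V} : wgt' G (Walk.nil : G.Walk v v) = 1 := by simp [wgt']

lemma wgt'_cons {u v w : V} (h : G.Adj u v) (p : G.Walk v w) :
    wgt' G (Walk.cons h p) = ((G.degree v : ℝ≥0∞))⁻¹ * wgt' G p := by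
  simp only [wgt', Walk.support_cons, List.tail_cons]
  conv_lhs => rw [p.support_eq_cons]
  rw [List.map_cons, List.prod_cons]

lemma gw_cons {u v w : V} (h : G.Adj u v) (p : G.Walk v w) :
    gw G V₀ (Walk.cons h p) =
      if u ∈ V₀ then ((G.degree v : ℝ≥0∞))⁻¹ * gw G V₀ p else 0 := by
  unfold gw
  by_cases hu : u ∈ V₀ <;> by_cases hp : ∀ x ∈ p.support, x ∈ V₀ <;>
    simp [Walk.support_cons, hu, hp, wgt'_cons]

variable (v₀ : V)

/-- Decomposition of walks of length `n+1` as a cons. -/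
noncomputable def consEquiv (v : V) (n : ℕ) :
    (Σ u : G.neighborSet v, {p : G.Walk (u : V) v₀ // p.length = n}) ≃
      {q : G.Walk v v₀ // q.length = n + 1} :=
  Equiv.ofBijective (fun a => ⟨Walk.cons ((G.mem_neighborSet _ _).mp a.1.2) a.2.1, by simp [a.2.2]⟩) (by
    constructor
    · rintro ⟨⟨u₁, h₁⟩, p₁, e₁⟩ ⟨⟨u₂, h₂⟩, p₂, e₂⟩ hab
      simp only [Subtype.mk.injEq] at hab
      have hu : u₁ = u₂ := by
        have := congrArg (fun q : G.Walk v v₀ => q.getVert 1) hab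
        simpa using this
      subst hu
      have hp : p₁ = p₂ := by injection hab
      subst hp
      rfl
    · rintro ⟨q, hq⟩
      cases q with
      | nil => simp at hq
      | cons h p => exact ⟨⟨⟨_, h⟩, ⟨p, by simpa using hq⟩⟩, rfl⟩)

lemma consEquiv_apply (v : V) (n : ℕ)
    (a : Σ u : G.neighborSet v, {p : G.Walk (u : V) v₀ // p.length = n}) :
    (consEquiv G v₀ v n a).1 = Walk.cons ((G.mem_neighborSet _ _).mp a.1.2) a.2.1 := rfl

/-- Total weight of good walks of length `n` from `v` to `v₀`. -/
noncomputable def FF (n : ℕ) (v : V) : ℝ≥0∞ :=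
  ∑' q : {q : G.Walk v v₀ // q.length = n}, gw G V₀ q.1

lemma FF_succ (n : ℕ) (v : V) :
    FF G V₀ v₀ (n + 1) v =
      if v ∈ V₀ then
        ∑ u ∈ G.neighborFinset v, ((G.degree u : ℝ≥0∞))⁻¹ * FF G V₀ v₀ n u
      else 0 := by
  rw [FF, ← (consEquiv G v₀ v n).tsum_eq, ENNReal.tsum_sigma']
  simp only [consEquiv_apply, gw_cons]
  by_cases hv : v ∈ V₀
  · simp only [hv, if_true]
    have h1 : ∀ u : (G.neighborSet v),
        (∑' p : {p : G.Walk (u : V) v₀ // p.length = n},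
          ((G.degree (u : V) : ℝ≥0∞))⁻¹ * gw G V₀ p.1)
        = ((G.degree (u : V) : ℝ≥0∞))⁻¹ * FF G V₀ v₀ n u := fun u =>
      ENNReal.tsum_mul_left
    rw [tsum_congr h1, tsum_fintype]
    exact Finset.sum_set_coe (f := fun u => ((G.degree u : ℝ≥0∞))⁻¹ * FF G V₀ v₀ n u)
      (s := G.neighborSet v)
  · simp [hv]

lemma FF_of_not_mem {n : ℕ} {v : V} (hv : v ∉ V₀) : FF G V₀ v₀ n v = 0 := by
  rw [FF, ENNReal.tsum_eq_zero]
  intro q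
  rw [gw, if_neg]
  intro hall
  exact hv (hall v q.1.start_mem_support)

lemma FF_zero_self (h : v₀ ∈ V₀) : FF G V₀ v₀ 0 v₀ = 1 := by
  rw [FF, tsum_eq_single (⟨Walk.nil, rfl⟩ : {q : G.Walk v₀ v₀ // q.length = 0})]
  · simp [gw, wgt'_nil, h]
  · rintro ⟨q, hq⟩ hne
    exact absurd (Subtype.ext (Walk.length_eq_zero_iff.mp hq).eq_nil) hne

lemma FF_zero_ne {v : V} (h : v ≠ v₀) : FF G V₀ v₀ 0 v = 0 := by
  have : IsEmpty {q : G.Walk v v₀ // q.length = 0} := by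
    constructor
    rintro ⟨q, hq⟩
    cases q with
    | nil => exact h rfl
    | cons h' p => simp at hq
  exact tsum_empty

/-- Total mass at time `n`. -/
noncomputable def SS (n : ℕ) : ℝ≥0∞ := ∑' v : V, FF G V₀ v₀ n v

/-- Exit mass at time `n`. -/
noncomputable def EE (n : ℕ) : ℝ≥0∞ :=
  ∑' u : V, ((G.degree u : ℝ≥0∞))⁻¹ *
    (({x | G.Adj u x ∧ x ∉ V₀}.ncard : ℝ≥0∞)) * FF G V₀ v₀ n u

lemma deg_pos (hG : G.Connected) (hproper : V₀ ≠ Set.univ) {u : V} (hu : u ∈ V₀) :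
    0 < G.degree u := by
  obtain ⟨w, hw⟩ : ∃ w, w ∉ V₀ := by
    by_contra hc
    push_neg at hc
    exact hproper (Set.eq_univ_of_forall hc)
  have hne : u ≠ w := fun e => hw (e ▸ hu)
  obtain ⟨p⟩ := hG.preconnected u w
  rw [G.degree_pos_iff_exists_adj]
  cases p with
  | nil => exact absurd rfl hne
  | cons h q => exact ⟨_, h⟩

lemma balance (hG : G.Connected) (hproper : V₀ ≠ Set.univ) (n : ℕ) :
    SS G V₀ v₀ (n + 1) + EE G V₀ v₀ n = SS G V₀ v₀ n := by
  classical
  have h1 : ∀ v, FF G V₀ v₀ (n + 1) v =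
      ∑' u : V, (if v ∈ V₀ ∧ G.Adj v u then
        ((G.degree u : ℝ≥0∞))⁻¹ * FF G V₀ v₀ n u else 0) := by
    intro v
    rw [FF_succ]
    by_cases hv : v ∈ V₀
    · rw [if_pos hv, eq_comm, tsum_eq_sum (s := G.neighborFinset v)]
      · exact Finset.sum_congr rfl fun u hu => by
          rw [if_pos ⟨hv, (G.mem_neighborFinset v u).mp hu⟩]
      · intro u hu
        rw [if_neg]
        rintro ⟨-, hadj⟩
        exact hu ((G.mem_neighborFinset v u).mpr hadj)
    · simp [hv]
  have h2 : SS G V₀ v₀ (n + 1) =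
      ∑' u : V, ((((G.neighborFinset u).filter (· ∈ V₀)).card : ℝ≥0∞)) *
        (((G.degree u : ℝ≥0∞))⁻¹ * FF G V₀ v₀ n u) := by
    rw [SS, tsum_congr h1, ENNReal.tsum_comm]
    refine tsum_congr fun u => ?_
    rw [tsum_eq_sum (s := (G.neighborFinset u).filter (· ∈ V₀)) ?_]
    · rw [Finset.sum_congr rfl (fun v hv => ?_), Finset.sum_const, nsmul_eq_mul]
      simp only [Finset.mem_filter] at hv
      rw [if_pos ⟨hv.2, ((G.mem_neighborFinset u v).mp hv.1).symm⟩]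
    · intro v hv
      rw [if_neg]
      rintro ⟨hv0, hadj⟩
      exact hv (Finset.mem_filter.mpr ⟨(G.mem_neighborFinset u v).mpr hadj.symm, hv0⟩)
  have hout : ∀ u : V, ({x | G.Adj u x ∧ x ∉ V₀}.ncard : ℝ≥0∞) =
      ((((G.neighborFinset u).filter (· ∉ V₀)).card : ℕ) : ℝ≥0∞) := by
    intro u
    norm_cast
    rw [← Set.ncard_coe_finset]
    congr 1
    ext x
    simp [G.mem_neighborFinset]
  have h3 : EE G V₀ v₀ n =
      ∑' u : V, ((((G.neighborFinset u).filter (· ∉ V₀)).card : ℝ≥0∞)) *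
        (((G.degree u : ℝ≥0∞))⁻¹ * FF G V₀ v₀ n u) := by
    rw [EE]
    refine tsum_congr fun u => ?_
    rw [hout u]
    ring
  rw [h2, h3, ← ENNReal.tsum_add, SS]
  refine tsum_congr fun u => ?_
  rw [← add_mul]
  norm_cast
  rw [show ((G.neighborFinset u).filter (· ∈ V₀)).card +
      ((G.neighborFinset u).filter (· ∉ V₀)).card = G.degree u from by
    rw [degree]; exact Finset.card_filter_add_card_filter_not _]
  by_cases hF : FF G V₀ v₀ n u = 0
  · simp [hF]
  · have hu : u ∈ V₀ := by
      by_contra hu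
      exact hF (FF_of_not_mem G V₀ v₀ hu)
    have hd : (G.degree u : ℝ≥0∞) ≠ 0 := by
      exact_mod_cast (deg_pos G V₀ hG hproper hu).ne'
    rw [← mul_assoc, ENNReal.mul_inv_cancel hd (by simp), one_mul]

lemma SS_zero (hv₀ : v₀ ∈ V₀) : SS G V₀ v₀ 0 = 1 := by
  rw [SS, tsum_eq_single v₀ (fun v hv => FF_zero_ne G V₀ v₀ hv)]
  exact FF_zero_self G V₀ v₀ hv₀

lemma telescope (hG : G.Connected) (hproper : V₀ ≠ Set.univ) (N : ℕ) :
    SS G V₀ v₀ 0 = SS G V₀ v₀ N + ∑ n ∈ Finset.range N, EE G V₀ v₀ n := by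
  induction N with
  | zero => simp
  | succ N ih =>
    rw [ih, Finset.sum_range_succ, ← balance G V₀ v₀ hG hproper N]
    ring

/-- Reversal bijection on good walks. -/
noncomputable def revEquiv (v : V) :
    {q : G.Walk v v₀ // ∀ x ∈ q.support, x ∈ V₀} ≃
      {ω : G.Walk v₀ v // ∀ x ∈ ω.support, x ∈ V₀} where
  toFun q := ⟨q.1.reverse, fun x hx => q.2 x (by simpa [Walk.support_reverse] using hx)⟩
  invFun ω := ⟨ω.1.reverse, fun x hx => ω.2 x (by simpa [Walk.support_reverse] using hx)⟩
  left_inv q := Subtype.ext (by simp)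
  right_inv ω := Subtype.ext (by simp)

lemma walkSum (v : V) :
    (∑' ω : {ω : G.Walk v₀ v // ∀ x ∈ ω.support, x ∈ V₀}, wgt G ω.1)
      = ∑' n, FF G V₀ v₀ n v := by
  classical
  rw [← (revEquiv G V₀ v₀ v).tsum_eq]
  have h1 : ∀ q : {q : G.Walk v v₀ // ∀ x ∈ q.support, x ∈ V₀},
      wgt G ((revEquiv G V₀ v₀ v) q).1 = wgt' G q.1 := by
    intro q
    rw [wgt_eq_wgt'_reverse]
    congr 1
    simp [revEquiv]
  rw [tsum_congr h1]
  have h2 : (∑' q : {q : G.Walk v v₀ // ∀ x ∈ q.support, x ∈ V₀}, wgt' G q.1)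
      = ∑' q : G.Walk v v₀, gw G V₀ q := by
    refine Eq.trans (tsum_subtype {q : G.Walk v v₀ | ∀ x ∈ q.support, x ∈ V₀} (wgt' G)) ?_
    refine tsum_congr fun q => ?_
    simp only [Set.indicator_apply, gw, Set.mem_setOf_eq]
  rw [h2, ← (Equiv.sigmaFiberEquiv (fun q : G.Walk v v₀ => q.length)).tsum_eq,
    ENNReal.tsum_sigma']
  rfl

end ExitProb

/-- For a connected locally finite graph `G`, a nonempty proper vertex subset `V₀`
and `v₀ ∈ V₀`, the total probability of leaving the induced subgraph on `V₀` is at most `1`: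
`∑_{v ∈ V₀} σ_v⁻¹ σ_v^out ∑_{ω : v₀ → v, ω ⊆ V₀} p_G(ω) ≤ 1`. -/
theorem exit_probability_le_one (G : SimpleGraph V) [G.LocallyFinite] (hG : G.Connected)
    (V₀ : Set V) (hne : V₀.Nonempty) (hproper : V₀ ≠ Set.univ)
    (v₀ : V) (hv₀ : v₀ ∈ V₀) :
    ∑' v : V₀, ((G.degree (v : V) : ℝ≥0∞))⁻¹ *
        (({x | G.Adj (v : V) x ∧ x ∉ V₀}.ncard : ℝ≥0∞)) *
        ∑' ω : {ω : G.Walk v₀ (v : V) // ∀ x ∈ ω.support, x ∈ V₀}, wgt G ω.1 ≤ 1 := by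
  classical
  set c : V → ℝ≥0∞ := fun u => ((G.degree u : ℝ≥0∞))⁻¹ *
    (({x | G.Adj u x ∧ x ∉ V₀}.ncard : ℝ≥0∞)) with hc
  calc (∑' v : V₀, c v * ∑' ω : {ω : G.Walk v₀ (v : V) // ∀ x ∈ ω.support, x ∈ V₀},
          wgt G ω.1)
      = ∑' v : V₀, ∑' n, c v * ExitProb.FF G V₀ v₀ n v := by
        refine tsum_congr fun v => ?_
        rw [ExitProb.walkSum, ENNReal.tsum_mul_left]
    _ = ∑' n, ∑' v : V₀, c v * ExitProb.FF G V₀ v₀ n v := ENNReal.tsum_comm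
    _ = ∑' n, ExitProb.EE G V₀ v₀ n := by
        refine tsum_congr fun n => ?_
        rw [ExitProb.EE, tsum_subtype V₀ (fun u => c u * ExitProb.FF G V₀ v₀ n u)]
        refine tsum_congr fun u => ?_
        by_cases hu : u ∈ V₀
        · rw [Set.indicator_of_mem hu]
        · rw [Set.indicator_of_notMem hu, ExitProb.FF_of_not_mem G V₀ v₀ hu, mul_zero]
    _ ≤ 1 := by
        refine ENNReal.tsum_le_of_sum_range_le fun N => ?_
        calc ∑ n ∈ Finset.range N, ExitProb.EE G V₀ v₀ n
            ≤ ExitProb.SS G V₀ v₀ N + ∑ n ∈ Finset.range N, ExitProb.EE G V₀ v₀ n :=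
              le_add_self
          _ = ExitProb.SS G V₀ v₀ 0 := (ExitProb.telescope G V₀ v₀ hG hproper N).symm
          _ = 1 := ExitProb.SS_zero G V₀ v₀ hv₀
end

section
/- Let G be a connected locally finite graph and let v_0 and u_0 be two distinct vertices of G. Then, with both sums taken in [0,infinity], the sum over all closed walks omega from v_0 to v_0 that visit u_0 of p_G(omega) is at most (sigma_{v_0}/sigma_{u_0}) times the sum over all walks omega from v_0 to u_0 of p_G(omega). -/
open scoped ENNReal

variable {V : Type*}

section Aux

variable {G : SimpleGraph V} [G.LocallyFinite] [DecidableEq V]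

@[simp] lemma wgt_nil {v : V} : wgt G (SimpleGraph.Walk.nil : G.Walk v v) = 1 := rfl

@[simp] lemma wgt_cons {u v w : V} (h : G.Adj u v) (p : G.Walk v w) :
    wgt G (p.cons h) = ((G.degree u : ℝ≥0∞))⁻¹ * wgt G p := by
  unfold wgt
  rw [SimpleGraph.Walk.support_cons, p.support_eq_cons]
  simp
  rw [List.dropLast_cons_of_ne_nil (by simp), List.prod_cons]

lemma wgt_append {u v w : V} (p : G.Walk u v) (q : G.Walk v w) :
    wgt G (p.append q) = wgt G p * wgt G q := by
  induction p with
  | nil => simp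
  | cons h p ih => rw [SimpleGraph.Walk.cons_append, wgt_cons, ih, wgt_cons, mul_assoc]

lemma wgt_mul_inv {u v : V} (p : G.Walk u v) :
    wgt G p * ((G.degree v : ℝ≥0∞))⁻¹ = (p.support.map fun x => ((G.degree x : ℝ≥0∞))⁻¹).prod := by
  induction p with
  | nil => simp [wgt]
  | cons h p ih => rw [wgt_cons, SimpleGraph.Walk.support_cons, List.map_cons, List.prod_cons,
      ← ih, mul_assoc]

lemma wgt_reverse {u v : V} (p : G.Walk u v) :
    wgt G p.reverse * ((G.degree u : ℝ≥0∞))⁻¹ = wgt G p * ((G.degree v : ℝ≥0∞))⁻¹ := by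
  rw [wgt_mul_inv, wgt_mul_inv, SimpleGraph.Walk.support_reverse, List.map_reverse,
    List.prod_reverse]

lemma nil_of_count_eq_one {u₀ : V} {p : G.Walk u₀ u₀}
    (h : p.support.count u₀ = 1) : p = SimpleGraph.Walk.nil := by
  cases p with
  | nil => rfl
  | cons h' q =>
    exfalso
    rw [SimpleGraph.Walk.support_cons, List.count_cons_self] at h
    have hm : u₀ ∈ q.support := q.end_mem_support
    have := List.count_pos_iff.mpr hm
    omega

lemma key_start (u₀ : V) (n : ℕ) :
    ∑' p : {p : G.Walk u₀ u₀ // p.support.count u₀ = 1 ∧ p.length ≤ n}, wgt G p.1 ≤ 1 := by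
  by_cases hne : Nonempty {p : G.Walk u₀ u₀ // p.support.count u₀ = 1 ∧ p.length ≤ n}
  · obtain ⟨a⟩ := hne
    have ha : a.1 = SimpleGraph.Walk.nil := nil_of_count_eq_one a.2.1
    rw [tsum_eq_single a]
    · rw [ha]; simp
    · intro b hb
      exact absurd (Subtype.ext ((nil_of_count_eq_one b.2.1).trans ha.symm)) hb
  · have : IsEmpty {p : G.Walk u₀ u₀ // p.support.count u₀ = 1 ∧ p.length ≤ n} :=
      not_nonempty_iff.mp hne
    rw [tsum_empty]; exact zero_le_one

lemma key (u₀ : V) : ∀ (n : ℕ) (x : V),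
    ∑' p : {p : G.Walk x u₀ // p.support.count u₀ = 1 ∧ p.length ≤ n}, wgt G p.1 ≤ 1 := by
  intro n
  induction n with
  | zero =>
    intro x
    by_cases hx : x = u₀
    · subst hx; exact key_start _ 0
    · have : IsEmpty {p : G.Walk x u₀ // p.support.count u₀ = 1 ∧ p.length ≤ 0} :=
        ⟨fun p => hx (SimpleGraph.Walk.eq_of_length_eq_zero (Nat.le_zero.mp p.2.2))⟩
      rw [tsum_empty]; exact zero_le_one
  | succ n ih =>
    intro x
    by_cases hx : x = u₀
    · subst hx; exact key_start _ (n+1)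
    · set T := {p : G.Walk x u₀ // p.support.count u₀ = 1 ∧ p.length ≤ n + 1} with hT
      have hnil : ∀ p : T, ¬ p.1.Nil := fun p => SimpleGraph.Walk.not_nil_of_ne hx
      have hsupp : ∀ p : T, x :: p.1.tail.support = p.1.support := fun p =>
        p.1.cons_support_tail (hnil p)
      have hcount : ∀ p : T, p.1.tail.support.count u₀ = 1 := by
        intro p
        have := p.2.1
        rw [← hsupp p, List.count_cons_of_ne hx] at this
        exact this
      have hlen : ∀ p : T, p.1.tail.length ≤ n := by
        intro p
        have h1 := SimpleGraph.Walk.length_tail_add_one (hnil p)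
        have h2 := p.2.2
        omega
      let Φ : T → Σ y : G.neighborSet x,
          {q : G.Walk y u₀ // q.support.count u₀ = 1 ∧ q.length ≤ n} :=
        fun p => ⟨⟨p.1.getVert 1, p.1.adj_snd (hnil p)⟩, ⟨p.1.tail, hcount p, hlen p⟩⟩
      have hrec : ∀ p : T, SimpleGraph.Walk.cons (Φ p).1.2 (Φ p).2.1 = p.1 := fun p =>
        p.1.cons_tail_eq (hnil p)
      have hinj : Function.Injective Φ := by
        intro a b hab
        apply Subtype.ext
        rw [← hrec a, ← hrec b, hab]
      have hwgt : ∀ p : T, wgt G p.1 = ((G.degree x : ℝ≥0∞))⁻¹ * wgt G (Φ p).2.1 := by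
        intro p
        conv_lhs => rw [← hrec p]
        exact wgt_cons _ _
      calc ∑' p : T, wgt G p.1
          = ∑' p : T, ((G.degree x : ℝ≥0∞))⁻¹ * wgt G (Φ p).2.1 := tsum_congr hwgt
        _ ≤ ∑' s : (Σ y : G.neighborSet x,
              {q : G.Walk y u₀ // q.support.count u₀ = 1 ∧ q.length ≤ n}),
              ((G.degree x : ℝ≥0∞))⁻¹ * wgt G s.2.1 :=
            ENNReal.tsum_comp_le_tsum_of_injective hinj _
        _ = ∑' (y : G.neighborSet x)
              (q : {q : G.Walk y u₀ // q.support.count u₀ = 1 ∧ q.length ≤ n}),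
              ((G.degree x : ℝ≥0∞))⁻¹ * wgt G q.1 := ENNReal.tsum_sigma' _
        _ = ∑' y : G.neighborSet x, ((G.degree x : ℝ≥0∞))⁻¹ *
              ∑' q : {q : G.Walk y u₀ // q.support.count u₀ = 1 ∧ q.length ≤ n}, wgt G q.1 :=
            tsum_congr fun y => ENNReal.tsum_mul_left
        _ ≤ ∑' _y : G.neighborSet x, ((G.degree x : ℝ≥0∞))⁻¹ * 1 :=
            ENNReal.tsum_le_tsum fun y => mul_le_mul_right (ih y.1) _
        _ = ((G.degree x : ℝ≥0∞))⁻¹ * (G.degree x : ℝ≥0∞) := by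
            rw [tsum_fintype, Finset.sum_const, Finset.card_univ,
              SimpleGraph.card_neighborSet_eq_degree, nsmul_eq_mul, mul_one, mul_comm]
        _ ≤ 1 := ENNReal.inv_mul_le_one _

lemma sum_count_le (u₀ x : V) :
    ∑' p : {p : G.Walk x u₀ // p.support.count u₀ = 1}, wgt G p.1 ≤ 1 := by
  rw [ENNReal.tsum_eq_iSup_sum]
  apply iSup_le
  intro s
  set n := s.sup fun p => p.1.length with hn
  have hb : ∀ p ∈ s, p.1.length ≤ n := fun p hp => Finset.le_sup (f := fun p => p.1.length) hp
  let e : {p : {p : G.Walk x u₀ // p.support.count u₀ = 1} // p ∈ s} ↪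
      {p : G.Walk x u₀ // p.support.count u₀ = 1 ∧ p.length ≤ n} :=
    ⟨fun q => ⟨q.1.1, q.1.2, hb q.1 q.2⟩, by
      intro a b hab
      dsimp only at hab
      rw [Subtype.mk.injEq] at hab
      exact Subtype.ext (Subtype.ext hab)⟩
  calc ∑ p ∈ s, wgt G p.1
      = ∑ q ∈ s.attach, wgt G q.1.1 := (Finset.sum_attach s _).symm
    _ = ∑ q ∈ s.attach.map e, wgt G q.1 := by rw [Finset.sum_map]; rfl
    _ ≤ ∑' p : {p : G.Walk x u₀ // p.support.count u₀ = 1 ∧ p.length ≤ n}, wgt G p.1 :=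
        ENNReal.sum_le_tsum _
    _ ≤ 1 := key u₀ n x

end Aux

/-- For a connected locally finite graph `G` and distinct vertices `v₀ ≠ u₀`,
the weighted sum over closed walks from `v₀` that visit `u₀` is at most
`(σ_{v₀}/σ_{u₀})` times the weighted sum over all walks from `v₀` to `u₀`. -/
theorem closed_walks_through_le (G : SimpleGraph V) [G.LocallyFinite] (hG : G.Connected)
    (v₀ u₀ : V) (hne : v₀ ≠ u₀) :
    ∑' ω : {ω : G.Walk v₀ v₀ // u₀ ∈ ω.support}, wgt G ω.1 ≤
      (G.degree v₀ : ℝ≥0∞) / (G.degree u₀ : ℝ≥0∞) * ∑' ω : G.Walk v₀ u₀, wgt G ω := by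
  classical
  obtain ⟨w⟩ := hG v₀ u₀
  have hw : ¬ w.Nil := SimpleGraph.Walk.not_nil_of_ne hne
  obtain ⟨y, hadj, -⟩ := SimpleGraph.Walk.not_nil_iff.mp hw
  have hdegpos : 0 < G.degree v₀ := (G.degree_pos_iff_exists_adj v₀).mpr ⟨y, hadj⟩
  have hdeg0 : (G.degree v₀ : ℝ≥0∞) ≠ 0 := by
    exact_mod_cast Nat.pos_iff_ne_zero.mp hdegpos
  have hdegtop : (G.degree v₀ : ℝ≥0∞) ≠ ⊤ := ENNReal.natCast_ne_top _
  have hrev : ∑' q : G.Walk u₀ v₀, wgt G q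
      = (G.degree v₀ : ℝ≥0∞) / (G.degree u₀ : ℝ≥0∞) * ∑' ω : G.Walk v₀ u₀, wgt G ω := by
    have hq : ∀ q : G.Walk u₀ v₀, wgt G q
        = (G.degree v₀ : ℝ≥0∞) / (G.degree u₀ : ℝ≥0∞) * wgt G q.reverse := by
      intro q
      calc wgt G q = wgt G q * ((G.degree v₀ : ℝ≥0∞)⁻¹ * (G.degree v₀ : ℝ≥0∞)) := by
            rw [ENNReal.inv_mul_cancel hdeg0 hdegtop, mul_one]
        _ = wgt G q * (G.degree v₀ : ℝ≥0∞)⁻¹ * (G.degree v₀ : ℝ≥0∞) := by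
            rw [mul_assoc]
        _ = wgt G q.reverse * (G.degree u₀ : ℝ≥0∞)⁻¹ * (G.degree v₀ : ℝ≥0∞) := by
            rw [wgt_reverse]
        _ = (G.degree v₀ : ℝ≥0∞) / (G.degree u₀ : ℝ≥0∞) * wgt G q.reverse := by
            rw [div_eq_mul_inv]; ring
    let e : G.Walk v₀ u₀ ≃ G.Walk u₀ v₀ :=
      ⟨SimpleGraph.Walk.reverse, SimpleGraph.Walk.reverse,
        fun p => p.reverse_reverse, fun p => p.reverse_reverse⟩
    calc ∑' q : G.Walk u₀ v₀, wgt G q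
        = ∑' q : G.Walk u₀ v₀,
            (G.degree v₀ : ℝ≥0∞) / (G.degree u₀ : ℝ≥0∞) * wgt G q.reverse := tsum_congr hq
      _ = (G.degree v₀ : ℝ≥0∞) / (G.degree u₀ : ℝ≥0∞) *
            ∑' q : G.Walk u₀ v₀, wgt G q.reverse := ENNReal.tsum_mul_left
      _ = (G.degree v₀ : ℝ≥0∞) / (G.degree u₀ : ℝ≥0∞) * ∑' ω : G.Walk v₀ u₀, wgt G ω := by
          congr 1
          rw [← e.tsum_eq (f := fun q => wgt G q.reverse)]
          exact tsum_congr fun ω => by simp [e]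
  have hΦw : ∀ ω : {ω : G.Walk v₀ v₀ // u₀ ∈ ω.support},
      wgt G ω.1 = wgt G (ω.1.takeUntil u₀ ω.2) * wgt G (ω.1.dropUntil u₀ ω.2) := by
    intro ω
    conv_lhs => rw [← SimpleGraph.Walk.take_spec ω.1 ω.2]
    rw [wgt_append]
  let S := {p : G.Walk v₀ u₀ // p.support.count u₀ = 1}
  let Φ : {ω : G.Walk v₀ v₀ // u₀ ∈ ω.support} → S × G.Walk u₀ v₀ :=
    fun ω => (⟨ω.1.takeUntil u₀ ω.2, SimpleGraph.Walk.count_support_takeUntil_eq_one ω.1 ω.2⟩,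
      ω.1.dropUntil u₀ ω.2)
  have hinj : Function.Injective Φ := by
    intro a b hab
    have h1 : (Φ a).1.1 = (Φ b).1.1 := by rw [hab]
    have h2 : (Φ a).2 = (Φ b).2 := by rw [hab]
    apply Subtype.ext
    rw [← SimpleGraph.Walk.take_spec a.1 a.2, ← SimpleGraph.Walk.take_spec b.1 b.2]
    exact congrArg₂ (fun p q => SimpleGraph.Walk.append p q) h1 h2
  calc ∑' ω : {ω : G.Walk v₀ v₀ // u₀ ∈ ω.support}, wgt G ω.1
      = ∑' ω : {ω : G.Walk v₀ v₀ // u₀ ∈ ω.support},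
          wgt G (Φ ω).1.1 * wgt G (Φ ω).2 := tsum_congr hΦw
    _ ≤ ∑' s : S × G.Walk u₀ v₀, wgt G s.1.1 * wgt G s.2 :=
        ENNReal.tsum_comp_le_tsum_of_injective hinj _
    _ = (∑' p : S, wgt G p.1) * ∑' q : G.Walk u₀ v₀, wgt G q := by
        rw [ENNReal.tsum_prod']
        calc ∑' (p : S) (q : G.Walk u₀ v₀), wgt G p.1 * wgt G q
            = ∑' p : S, wgt G p.1 * ∑' q : G.Walk u₀ v₀, wgt G q :=
              tsum_congr fun p => ENNReal.tsum_mul_left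
          _ = (∑' p : S, wgt G p.1) * ∑' q : G.Walk u₀ v₀, wgt G q :=
              ENNReal.tsum_mul_right
    _ ≤ 1 * ∑' q : G.Walk u₀ v₀, wgt G q := mul_le_mul_left (sum_count_le u₀ v₀) _
    _ = (G.degree v₀ : ℝ≥0∞) / (G.degree u₀ : ℝ≥0∞) * ∑' ω : G.Walk v₀ u₀, wgt G ω := by
        rw [one_mul, hrev]
end

section
/- Let G be a connected locally finite graph and let v_0 and u_0 be two distinct vertices of G. Then the sum, taken in [0,infinity], over all closed walks omega from v_0 to v_0 that do not visit u_0 of p_G(omega) is at most sigma_{v_0} * d_G(v_0, u_0), where d_G denotes the graph distance in G. -/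
set_option linter.unusedSectionVars false
set_option maxHeartbeats 1000000

open scoped ENNReal
open Finset

variable {V : Type*}

namespace CWA

open SimpleGraph Walk

variable (G : SimpleGraph V) [G.LocallyFinite] {v₀ u₀ : V}

lemma wgt_nil {v : V} : wgt G (Walk.nil : G.Walk v v) = 1 := by
  simp [wgt]

lemma wgt_cons {x y v : V} (h : G.Adj x y) (p : G.Walk y v) :
    wgt G (Walk.cons h p) = (G.degree x : ℝ≥0∞)⁻¹ * wgt G p := by
  simp only [wgt, Walk.support_cons]
  rw [List.dropLast_cons_of_ne_nil (Walk.support_ne_nil p)]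
  simp

lemma wgt_copy {x y x' y' : V} (p : G.Walk x y) (hx : x = x') (hy : y = y') :
    wgt G (p.copy hx hy) = wgt G p := by
  subst hx; subst hy; rfl

lemma wgt_tail {x v : V} (p : G.Walk x v) (hp : ¬ p.Nil) :
    wgt G p = (G.degree x : ℝ≥0∞)⁻¹ * wgt G p.tail := by
  conv_lhs => rw [← p.cons_tail_eq hp]
  rw [wgt_cons]

/-- canonical decomposition of a non-nil walk -/
def dec {x v : V} (p : G.Walk x v) : Σ y : V, G.Walk y v := ⟨p.getVert 1, p.tail⟩

lemma copy_heq {x y x' y' : V} (p : G.Walk x y) (hx : x = x') (hy : y = y') :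
    HEq (p.copy hx hy) p := by
  subst hx; subst hy; rfl

lemma dec_cons {x y v : V} (h : G.Adj x y) (q : G.Walk y v) :
    dec G (Walk.cons h q) = ⟨y, q⟩ := by
  refine Sigma.ext (Walk.snd_cons q h) ?_
  show HEq (Walk.cons h q).tail q
  rw [Walk.tail_cons]
  exact copy_heq G q _ _

lemma eq_of_dec {x v : V} {p q : G.Walk x v} (hp : ¬ p.Nil) (hq : ¬ q.Nil)
    (h : dec G p = dec G q) : p = q := by
  obtain ⟨yp, ap, pp, rfl⟩ := Walk.not_nil_iff.1 hp
  obtain ⟨yq, aq, qq, rfl⟩ := Walk.not_nil_iff.1 hq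
  rw [dec_cons, dec_cons] at h
  obtain ⟨h1, h2⟩ := Sigma.mk.inj_iff.1 h
  subst h1
  rw [heq_iff_eq] at h2
  subst h2
  rfl

lemma sigma_eq_of_fst {v y : V} (z : Σ y : V, G.Walk y v) (h : z.1 = y) :
    (⟨y, z.2.copy h rfl⟩ : Σ y : V, G.Walk y v) = z := by
  cases z
  subst h
  simp [Walk.copy_rfl_rfl]

variable (v₀ u₀ : V)

open Classical in
noncomputable def F : ℕ → V → ℝ≥0∞
  | 0, x => if x = v₀ then 1 else 0
  | (n+1), x => (if x = v₀ then 1 else 0) +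
      if x = u₀ then 0 else (G.degree x : ℝ≥0∞)⁻¹ * ∑ y ∈ G.neighborFinset x, F n y

lemma claimA : ∀ (n : ℕ) (x : V) (s : Finset (G.Walk x v₀)),
    (∀ p ∈ s, u₀ ∉ p.support) → (∀ p ∈ s, p.length ≤ n) →
    ∑ p ∈ s, wgt G p ≤ F G v₀ u₀ n x := by
  classical
  intro n
  induction n with
  | zero =>
    intro x s hsup hlen
    rcases s.eq_empty_or_nonempty with rfl | ⟨p, hp⟩
    · simp
    · have hx : v₀ = x := (Walk.Nil.eq (Walk.nil_iff_length_eq.2 (Nat.le_zero.1 (hlen p hp)))).symm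
      subst hx
      have hsub : s ⊆ {Walk.nil} := by
        intro q hq
        simp only [Finset.mem_singleton]
        exact Walk.Nil.eq_nil (Walk.nil_iff_length_eq.2 (Nat.le_zero.1 (hlen q hq)))
      calc ∑ p ∈ s, wgt G p ≤ ∑ p ∈ ({Walk.nil} : Finset (G.Walk v₀ v₀)), wgt G p :=
            Finset.sum_le_sum_of_subset hsub
        _ = 1 := by simp [wgt_nil]
        _ ≤ F G v₀ u₀ 0 v₀ := by simp [F]
  | succ n ih =>
    intro x s hsup hlen
    rcases s.eq_empty_or_nonempty with rfl | ⟨p₀, hp₀⟩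
    · simp
    have hxu : x ≠ u₀ := by
      rintro rfl; exact hsup p₀ hp₀ p₀.start_mem_support
    rw [← Finset.sum_filter_add_sum_filter_not s (fun p => p.length = 0)]
    have h0 : ∑ p ∈ s.filter (fun p => p.length = 0), wgt G p ≤
        (if x = v₀ then (1:ℝ≥0∞) else 0) := by
      rcases (s.filter (fun p => p.length = 0)).eq_empty_or_nonempty with he | ⟨q, hq⟩
      · rw [he, Finset.sum_empty]; exact zero_le
      · rw [Finset.mem_filter] at hq
        have hx : v₀ = x := (Walk.Nil.eq (Walk.nil_iff_length_eq.2 hq.2)).symm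
        subst hx
        rw [if_pos rfl]
        have hsub : s.filter (fun p => p.length = 0) ⊆ {Walk.nil} := by
          intro r hr
          rw [Finset.mem_filter] at hr
          simp only [Finset.mem_singleton]
          exact Walk.Nil.eq_nil (Walk.nil_iff_length_eq.2 hr.2)
        calc ∑ p ∈ s.filter (fun p => p.length = 0), wgt G p
            ≤ ∑ p ∈ ({Walk.nil} : Finset (G.Walk v₀ v₀)), wgt G p :=
              Finset.sum_le_sum_of_subset hsub
          _ = 1 := by simp [wgt_nil]
    have h1 : ∑ p ∈ s.filter (fun p => ¬ p.length = 0), wgt G p ≤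
        (G.degree x : ℝ≥0∞)⁻¹ * ∑ y ∈ G.neighborFinset x, F G v₀ u₀ n y := by
      set s1 := s.filter (fun p => ¬ p.length = 0) with hs1
      have hnil : ∀ p ∈ s1, ¬ p.Nil := by
        intro p hp
        rw [Walk.nil_iff_length_eq]
        exact (Finset.mem_filter.1 hp).2
      have step1 : ∑ p ∈ s1, wgt G p = (G.degree x : ℝ≥0∞)⁻¹ * ∑ p ∈ s1, wgt G p.tail := by
        rw [Finset.mul_sum]
        exact Finset.sum_congr rfl fun p hp => wgt_tail G p (hnil p hp)
      rw [step1]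
      refine mul_le_mul_right ?_ _
      -- now: ∑ p ∈ s1, wgt p.tail ≤ ∑ y ∈ nbr x, F n y
      set T : Finset (Σ y : V, G.Walk y v₀) := s1.image (dec G) with hT
      have hinj : ∀ p ∈ s1, ∀ q ∈ s1, dec G p = dec G q → p = q := fun p hp q hq h =>
        eq_of_dec G (hnil p hp) (hnil q hq) h
      have step2 : ∑ p ∈ s1, wgt G p.tail = ∑ z ∈ T, wgt G z.2 := by
        rw [hT, Finset.sum_image hinj]
        rfl
      rw [step2]
      have hmaps : ∀ z ∈ T, z.1 ∈ G.neighborFinset x := by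
        intro z hz
        obtain ⟨p, hp, rfl⟩ := Finset.mem_image.1 hz
        rw [SimpleGraph.mem_neighborFinset]
        exact Walk.adj_snd (hnil p hp)
      rw [← Finset.sum_fiberwise_of_maps_to hmaps (fun z => wgt G z.2)]
      refine Finset.sum_le_sum fun y hy => ?_
      -- inner: ∑ z ∈ T.filter (·.1 = y), wgt z.2 ≤ F n y
      set Ty := T.filter (fun z => z.1 = y) with hTy
      set U : Finset (G.Walk y v₀) :=
        Ty.attach.image (fun z => z.1.2.copy (Finset.mem_filter.1 z.2).2 rfl) with hU
      have hinj2 : ∀ a ∈ Ty.attach, ∀ b ∈ Ty.attach,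
          a.1.2.copy (Finset.mem_filter.1 a.2).2 rfl = b.1.2.copy (Finset.mem_filter.1 b.2).2 rfl
          → a = b := by
        intro a _ b _ h
        have ha := sigma_eq_of_fst G a.1 (Finset.mem_filter.1 a.2).2
        have hb := sigma_eq_of_fst G b.1 (Finset.mem_filter.1 b.2).2
        have : a.1 = b.1 := by
          rw [← ha, ← hb, h]
        exact Subtype.ext this
      have step3 : ∑ z ∈ Ty, wgt G z.2 = ∑ q ∈ U, wgt G q := by
        rw [hU, Finset.sum_image hinj2, ← Finset.sum_attach Ty (fun z => wgt G z.2)]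
        exact Finset.sum_congr rfl fun a _ => (wgt_copy G _ _ _).symm
      rw [step3]
      refine ih y U ?_ ?_
      · intro q hq
        obtain ⟨z, hz, rfl⟩ := Finset.mem_image.1 hq
        obtain ⟨p, hp, hdp⟩ := Finset.mem_image.1 (Finset.mem_filter.1 z.2).1
        have hps : u₀ ∉ p.support := hsup p (Finset.mem_filter.1 (hs1 ▸ hp)).1
        rw [Walk.support_copy]
        have hss : p.tail.support = z.1.2.support :=
          congrArg (fun (w : Σ y : V, G.Walk y v₀) => w.2.support) hdp
        rw [← hss, Walk.support_tail_of_not_nil p (hnil p hp)]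
        exact fun hmem => hps (List.mem_of_mem_tail hmem)
      · intro q hq
        obtain ⟨z, hz, rfl⟩ := Finset.mem_image.1 hq
        obtain ⟨p, hp, hdp⟩ := Finset.mem_image.1 (Finset.mem_filter.1 z.2).1
        have hpl : p.length ≤ n + 1 := hlen p (Finset.mem_filter.1 (hs1 ▸ hp)).1
        rw [Walk.length_copy]
        have hll : p.tail.length = z.1.2.length :=
          congrArg (fun (w : Σ y : V, G.Walk y v₀) => w.2.length) hdp
        rw [← hll]
        have := p.length_tail_add_one (hnil p hp)
        omega
    calc ∑ p ∈ s.filter (fun p => p.length = 0), wgt G p +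
          ∑ p ∈ s.filter (fun p => ¬ p.length = 0), wgt G p
        ≤ (if x = v₀ then (1:ℝ≥0∞) else 0) +
          (G.degree x : ℝ≥0∞)⁻¹ * ∑ y ∈ G.neighborFinset x, F G v₀ u₀ n y :=
          add_le_add h0 h1
      _ ≤ F G v₀ u₀ (n+1) x := by
          simp only [F, if_neg hxu]
          exact le_rfl

lemma F_u₀ (hne : v₀ ≠ u₀) : ∀ n, F G v₀ u₀ n u₀ = 0 := by
  intro n
  cases n with
  | zero => simp [F, Ne.symm hne]
  | succ n => simp [F, Ne.symm hne]

lemma F_pos_dist (hG : G.Connected) (hne : v₀ ≠ u₀) :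
    ∀ n x, F G v₀ u₀ n x ≠ 0 → G.dist v₀ x ≤ n := by
  classical
  intro n
  induction n with
  | zero =>
    intro x h
    by_cases hx : x = v₀
    · subst hx; simp [SimpleGraph.dist_self]
    · simp [F, hx] at h
  | succ n ih =>
    intro x h
    by_cases hx : x = v₀
    · subst hx; simp [SimpleGraph.dist_self]
    by_cases hxu : x = u₀
    · rw [hxu] at h; exact absurd (F_u₀ G v₀ u₀ hne (n+1)) h
    simp only [F, if_neg hx, if_neg hxu, zero_add] at h
    have hsum : ∑ y ∈ G.neighborFinset x, F G v₀ u₀ n y ≠ 0 := by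
      intro h0; rw [h0, mul_zero] at h; exact h rfl
    obtain ⟨y, hy, hFy⟩ := Finset.exists_ne_zero_of_sum_ne_zero hsum
    have hadj : G.Adj y x := by
      rw [SimpleGraph.mem_neighborFinset] at hy; exact hy.symm
    calc G.dist v₀ x ≤ G.dist v₀ y + G.dist y x := hG.dist_triangle
      _ ≤ n + 1 := by
          have h1 : G.dist y x = 1 := SimpleGraph.dist_eq_one_iff_adj.2 hadj
          have := ih y hFy
          omega

lemma ball_finite (hG : G.Connected) : ∀ r : ℕ, {x : V | G.dist v₀ x ≤ r}.Finite := by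
  intro r
  induction r with
  | zero =>
    refine Set.Finite.subset (Set.finite_singleton v₀) ?_
    intro x hx
    simp only [Set.mem_setOf_eq, Nat.le_zero] at hx
    have := (hG.dist_eq_zero_iff).1 hx
    simp [this.symm]
  | succ r ih =>
    have hsub : {x : V | G.dist v₀ x ≤ r+1} ⊆
        {x : V | G.dist v₀ x ≤ r} ∪ ⋃ y ∈ {x : V | G.dist v₀ x ≤ r}, (G.neighborSet y : Set V) := by
      intro x hx
      simp only [Set.mem_setOf_eq] at hx
      by_cases h : G.dist v₀ x ≤ r
      · exact Or.inl h
      · have hd : G.dist v₀ x = r + 1 := by omega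
        have hreach : G.Reachable v₀ x := hG.preconnected v₀ x
        obtain ⟨p, hp⟩ := hreach.exists_walk_length_eq_dist
        set q := p.reverse with hq
        have hqlen : q.length = r + 1 := by rw [hq, Walk.length_reverse, hp, hd]
        have hqnil : ¬ q.Nil := by rw [Walk.nil_iff_length_eq, hqlen]; omega
        set y := q.getVert 1 with hy
        have hadj : G.Adj x y := Walk.adj_snd hqnil
        have htl : q.tail.length = r := by
          have := q.length_tail_add_one hqnil
          omega
        have hdy : G.dist v₀ y ≤ r := by
          rw [SimpleGraph.dist_comm]
          calc G.dist y v₀ ≤ q.tail.length := SimpleGraph.dist_le _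
            _ = r := htl
        refine Or.inr ?_
        refine Set.mem_biUnion hdy ?_
        exact hadj.symm
    refine Set.Finite.subset (Set.Finite.union ih ?_) hsub
    exact Set.Finite.biUnion ih fun y _ => (G.neighborSet y).toFinite

lemma deg_pos (hG : G.Connected) (hne : v₀ ≠ u₀) (x : V) : 0 < G.degree x := by
  rw [SimpleGraph.degree_pos_iff_exists_adj]
  by_cases hx : x = v₀
  · subst hx
    obtain ⟨p⟩ := hG.preconnected x u₀
    have hnil : ¬ p.Nil := Walk.not_nil_of_ne hne
    exact ⟨p.getVert 1, Walk.adj_snd hnil⟩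
  · obtain ⟨p⟩ := hG.preconnected x v₀
    have hnil : ¬ p.Nil := Walk.not_nil_of_ne hx
    exact ⟨p.getVert 1, Walk.adj_snd hnil⟩

lemma dist_getVert_le (hG : G.Connected) {a b : V} (p : G.Walk a b) :
    ∀ k, G.dist a (p.getVert k) ≤ k := by
  intro k
  induction k with
  | zero => simp [Walk.getVert_zero]
  | succ k ih =>
    by_cases h : k < p.length
    · have hadj := p.adj_getVert_succ h
      calc G.dist a (p.getVert (k+1)) ≤
            G.dist a (p.getVert k) + G.dist (p.getVert k) (p.getVert (k+1)) := hG.dist_triangle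
        _ ≤ k + 1 := by
            have h1 : G.dist (p.getVert k) (p.getVert (k+1)) = 1 :=
              SimpleGraph.dist_eq_one_iff_adj.2 hadj
            omega
    · have h1 : p.getVert (k+1) = b := p.getVert_of_length_le (by omega)
      have h2 : p.getVert k = b := p.getVert_of_length_le (by omega)
      rw [h1, ← h2]
      omega

lemma dist_getVert_to_end (hG : G.Connected) {a b : V} (p : G.Walk a b) :
    ∀ j, p.length - j ≤ p.length → G.dist (p.getVert (p.length - j)) b ≤ j := by
  intro j
  induction j with
  | zero =>
    intro _
    simp [Nat.sub_zero, p.getVert_length]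
  | succ j ih =>
    intro _
    by_cases hj : p.length ≤ j
    · have : p.length - (j+1) = p.length - j := by omega
      rw [this]
      exact le_trans (ih (by omega)) (by omega)
    · set k := p.length - (j+1) with hk
      have hklt : k < p.length := by omega
      have hadj := p.adj_getVert_succ hklt
      have hk1 : k + 1 = p.length - j := by omega
      calc G.dist (p.getVert k) b ≤
            G.dist (p.getVert k) (p.getVert (k+1)) + G.dist (p.getVert (k+1)) b :=
              hG.dist_triangle
        _ ≤ j + 1 := by
            have h1 : G.dist (p.getVert k) (p.getVert (k+1)) = 1 :=
              SimpleGraph.dist_eq_one_iff_adj.2 hadj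
            have h2 : G.dist (p.getVert (k+1)) b ≤ j := by
              rw [hk1]; exact ih (by omega)
            omega

lemma exists_W [DecidableEq V] (hG : G.Connected) (hne : v₀ ≠ u₀) (R : ℕ) (hdR : G.dist v₀ u₀ ≤ R) :
    ∃ W' : V → ℝ,
      (∀ x, 0 ≤ W' x) ∧
      (∀ x, ¬ (G.dist v₀ x ≤ R ∧ x ≠ u₀) → W' x = 0) ∧
      (∀ x, G.dist v₀ x ≤ R → x ≠ u₀ →
        (G.degree x : ℝ) * W' x = (if x = v₀ then 1 else 0) +
          ∑ y ∈ (G.neighborFinset x).filter (fun y => G.dist v₀ y ≤ R ∧ y ≠ u₀), W' y) ∧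
      W' v₀ ≤ (G.dist v₀ u₀ : ℝ) := by
  classical
  set d := G.dist v₀ u₀ with hd
  have hd1 : 1 ≤ d := by
    have : d ≠ 0 := fun h0 => hne ((hG.dist_eq_zero_iff).1 h0)
    omega
  set Aset : Set V := {x : V | G.dist v₀ x ≤ R ∧ x ≠ u₀} with hAset
  have hAfin : Aset.Finite :=
    Set.Finite.subset (ball_finite G v₀ hG R) (fun x hx => hx.1)
  haveI : Fintype Aset := hAfin.fintype
  have hv₀A : v₀ ∈ Aset := ⟨by simp [SimpleGraph.dist_self], hne⟩
  set v' : Aset := ⟨v₀, hv₀A⟩ with hv'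
  -- the adjacency finset within Aset
  set c : Aset → Finset Aset := fun x => Finset.univ.filter (fun y : Aset => G.Adj x.1 y.1)
    with hc
  have hcard : ∀ x : Aset, (c x).card ≤ G.degree x.1 := by
    intro x
    have : (c x).card = ((c x).image (fun y : Aset => y.1)).card :=
      (Finset.card_image_of_injOn (Subtype.val_injective.injOn)).symm
    rw [this]
    apply Finset.card_le_card
    intro y hy
    obtain ⟨y', hy', rfl⟩ := Finset.mem_image.1 hy
    rw [SimpleGraph.mem_neighborFinset]
    exact (Finset.mem_filter.1 hy').2
  -- the linear operator
  set Lf : (Aset → ℝ) → (Aset → ℝ) :=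
    fun W x => (G.degree x.1 : ℝ) * W x - ∑ y ∈ c x, W y with hLf
  set L : (Aset → ℝ) →ₗ[ℝ] (Aset → ℝ) :=
    { toFun := Lf
      map_add' := by
        intro a b; funext x
        simp only [Lf, Pi.add_apply, Finset.sum_add_distrib]
        ring
      map_smul' := by
        intro r a; funext x
        simp only [Lf, Pi.smul_apply, smul_eq_mul, RingHom.id_apply]
        rw [mul_sub, Finset.mul_sum]
        ring } with hL
  -- maximum principle
  have hMP : ∀ b : Aset → ℝ, (∀ x, 0 ≤ b x) → ∀ W : Aset → ℝ, L W = b → ∀ x, 0 ≤ W x := by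
    intro b hb W hWb
    have hWb' : ∀ x : Aset, (G.degree x.1 : ℝ) * W x - ∑ y ∈ c x, W y = b x :=
      fun x => congrFun hWb x
    obtain ⟨x₀, -, hmin⟩ := Finset.exists_min_image Finset.univ W ⟨v', Finset.mem_univ v'⟩
    set m := W x₀ with hm
    rcases le_or_gt 0 m with hm0 | hm0
    · intro x; exact le_trans hm0 (hmin x (Finset.mem_univ x))
    · exfalso
      have key : ∀ k, ∀ z : Aset, G.dist z.1 u₀ ≤ k → W z = m → False := by
        intro k
        induction k with
        | zero =>
          intro z hz _
          have : z.1 = u₀ := (hG.dist_eq_zero_iff).1 (Nat.le_zero.1 hz)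
          exact z.2.2 this
        | succ k ih =>
          intro z hzk hzm
          have hge : ∀ y ∈ c z, m ≤ W y := fun y _ => hmin y (Finset.mem_univ y)
          have h1 : ((c z).card : ℝ) * m ≤ ∑ y ∈ c z, W y := by
            calc ((c z).card : ℝ) * m = ∑ _y ∈ c z, m := by
                  rw [Finset.sum_const, nsmul_eq_mul]
              _ ≤ ∑ y ∈ c z, W y := Finset.sum_le_sum hge
          have h2 : (G.degree z.1 : ℝ) * m - ∑ y ∈ c z, W y = b z := by
            rw [← hzm]; exact hWb' z
          by_cases hslack : (c z).card < G.degree z.1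
          · have hcast : ((c z).card : ℝ) < (G.degree z.1 : ℝ) := by
              exact_mod_cast hslack
            nlinarith [hb z]
          · have hcards : ((c z).card : ℝ) = (G.degree z.1 : ℝ) := by
              have := hcard z
              have h3 : (c z).card = G.degree z.1 := le_antisymm this (not_lt.1 hslack)
              exact_mod_cast h3
            have heq : ∀ y ∈ c z, W y = m := by
              have hzero : ∑ y ∈ c z, (W y - m) = 0 := by
                rw [Finset.sum_sub_distrib, Finset.sum_const, nsmul_eq_mul]
                nlinarith [hb z]
              intro y hy
              have := (Finset.sum_eq_zero_iff_of_nonneg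
                (fun i hi => sub_nonneg.2 (hge i hi))).1 hzero y hy
              linarith
            -- full neighborhood
            have himg : (c z).image (fun y : Aset => y.1) = G.neighborFinset z.1 := by
              apply Finset.eq_of_subset_of_card_le
              · intro y hy
                obtain ⟨y', hy', rfl⟩ := Finset.mem_image.1 hy
                rw [SimpleGraph.mem_neighborFinset]
                exact (Finset.mem_filter.1 hy').2
              · rw [Finset.card_image_of_injOn (Subtype.val_injective.injOn)]
                have h3 : (c z).card = G.degree z.1 := by exact_mod_cast hcards
                rw [h3]
                exact le_rfl
            -- geodesic step towards u₀
            have hz_ne : z.1 ≠ u₀ := z.2.2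
            have hdz : G.dist z.1 u₀ ≠ 0 := fun h0 => hz_ne ((hG.dist_eq_zero_iff).1 h0)
            obtain ⟨p, hp⟩ := (hG.preconnected z.1 u₀).exists_walk_length_eq_dist
            have hpnil : ¬ p.Nil := by
              rw [Walk.nil_iff_length_eq, hp]; exact hdz
            have hadj : G.Adj z.1 (p.getVert 1) := Walk.adj_snd hpnil
            have hy₁d : G.dist (p.getVert 1) u₀ ≤ k := by
              have htl := p.length_tail_add_one hpnil
              have : G.dist (p.getVert 1) u₀ ≤ p.tail.length := SimpleGraph.dist_le _
              omega
            have hy₁mem : p.getVert 1 ∈ (c z).image (fun y : Aset => y.1) := by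
              rw [himg, SimpleGraph.mem_neighborFinset]; exact hadj
            obtain ⟨y', hy', hy'val⟩ := Finset.mem_image.1 hy₁mem
            exact ih y' (by rw [hy'val]; exact hy₁d) (heq y' hy')
      exact key (G.dist x₀.1 u₀) x₀ le_rfl rfl
  -- injectivity and surjectivity
  have hinj : Function.Injective L := by
    rw [injective_iff_map_eq_zero L]
    intro W hW0
    have h1 : ∀ x, 0 ≤ W x := hMP 0 (fun x => le_rfl) W hW0
    have h2 : ∀ x, 0 ≤ (-W) x := by
      apply hMP 0 (fun x => le_rfl) (-W)
      rw [map_neg, hW0, neg_zero]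
    funext x
    have ha := h1 x
    have hb := h2 x
    simp only [Pi.neg_apply] at hb
    simp only [Pi.zero_apply]
    linarith
  have hsurj : Function.Surjective L := LinearMap.injective_iff_surjective.1 hinj
  set δ : Aset → ℝ := fun x => if x = v' then 1 else 0 with hδ
  obtain ⟨W, hW⟩ := hsurj δ
  have hWpos : ∀ x, 0 ≤ W x := hMP δ (fun x => by rw [hδ]; positivity) W hW
  have hWb' : ∀ x : Aset, (G.degree x.1 : ℝ) * W x - ∑ y ∈ c x, W y = δ x :=
    fun x => congrFun hW x
  -- energy identity
  set S1 := ∑ x : Aset, (G.degree x.1 : ℝ) * W x ^ 2 with hS1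
  set S2 := ∑ x : Aset, ∑ y ∈ c x, W x * W y with hS2
  set SC := ∑ x : Aset, ((c x).card : ℝ) * W x ^ 2 with hSC
  set Dsum := ∑ x : Aset, ∑ y ∈ c x, (W x - W y) ^ 2 with hDsum
  set Slsum := ∑ x : Aset, ((G.degree x.1 : ℝ) - (c x).card) * W x ^ 2 with hSlsum
  have hswap : ∀ f : Aset → Aset → ℝ,
      ∑ x : Aset, ∑ y ∈ c x, f x y = ∑ y : Aset, ∑ x ∈ c y, f x y := by
    intro f
    simp only [hc, Finset.sum_filter]
    rw [Finset.sum_comm]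
    refine Finset.sum_congr rfl fun y _ => Finset.sum_congr rfl fun x _ => ?_
    congr 1
    simp [SimpleGraph.adj_comm]
  have e1 : W v' = S1 - S2 := by
    have hWv : W v' = ∑ x : Aset, W x * δ x := by
      rw [hδ]
      simp only [mul_ite, mul_one, mul_zero]
      rw [Finset.sum_ite_eq' Finset.univ v' W]
      simp
    rw [hWv, hS1, hS2, ← Finset.sum_sub_distrib]
    refine Finset.sum_congr rfl fun x _ => ?_
    have := hWb' x
    have hmul : W x * ((G.degree x.1 : ℝ) * W x - ∑ y ∈ c x, W y) = W x * δ x := by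
      rw [this]
    rw [← hmul, mul_sub, Finset.mul_sum]
    congr 1
    ring
  have e2 : Dsum = SC + SC - 2 * S2 := by
    have expand : ∀ x : Aset, ∑ y ∈ c x, (W x - W y) ^ 2 =
        ((c x).card : ℝ) * W x ^ 2 + ∑ y ∈ c x, W y ^ 2 - 2 * ∑ y ∈ c x, W x * W y := by
      intro x
      have : ∀ y ∈ c x, (W x - W y)^2 = W x ^ 2 + W y ^2 - 2 * (W x * W y) :=
        fun y _ => by ring
      rw [Finset.sum_congr rfl this, Finset.sum_sub_distrib, Finset.sum_add_distrib,
        Finset.sum_const, nsmul_eq_mul, ← Finset.mul_sum]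
    have hsw : ∑ x : Aset, ∑ y ∈ c x, W y ^ 2 = SC := by
      rw [hswap (fun x y => W y ^ 2), hSC]
      refine Finset.sum_congr rfl fun y _ => ?_
      rw [Finset.sum_const, nsmul_eq_mul]
    rw [hDsum, Finset.sum_congr rfl (fun x _ => expand x), Finset.sum_sub_distrib,
      Finset.sum_add_distrib, hsw]
    rw [hSC, hS2, Finset.mul_sum]
  have e3 : Slsum = S1 - SC := by
    rw [hSlsum, hS1, hSC, ← Finset.sum_sub_distrib]
    refine Finset.sum_congr rfl fun x _ => ?_
    ring
  have henergy : 2 * W v' = Dsum + 2 * Slsum := by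
    rw [e2, e3, e1]; ring
  -- geodesic
  obtain ⟨p, hp⟩ := (hG.preconnected v₀ u₀).exists_walk_length_eq_dist
  rw [← hd] at hp
  have hzk_le : ∀ k, G.dist v₀ (p.getVert k) ≤ k := fun k => dist_getVert_le G hG p k
  have hzk_dist : ∀ k, k ≤ d → G.dist (p.getVert k) u₀ = d - k := by
    intro k hk
    have hupper : G.dist (p.getVert k) u₀ ≤ d - k := by
      have := dist_getVert_to_end G hG p (d - k) (by omega)
      have harg : p.length - (d - k) = k := by omega
      rw [harg] at this
      exact this
    have hlower : d ≤ k + G.dist (p.getVert k) u₀ := by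
      calc d ≤ G.dist v₀ (p.getVert k) + G.dist (p.getVert k) u₀ := by
            rw [hd]; exact hG.dist_triangle
        _ ≤ k + G.dist (p.getVert k) u₀ := by
            have := hzk_le k; omega
    omega
  -- geodesic vertices inside Aset
  have hz_ne_u : ∀ k, k < d → p.getVert k ≠ u₀ := by
    intro k hk h0
    have h1 := hzk_dist k (by omega)
    rw [h0] at h1
    rw [SimpleGraph.dist_self] at h1
    omega
  have hzA : ∀ k, k < d → p.getVert k ∈ Aset := by
    intro k hk
    exact ⟨le_trans (hzk_le k) (by omega), hz_ne_u k hk⟩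
  set ζ : ℕ → Aset := fun k => if hk : k < d then ⟨p.getVert k, hzA k hk⟩ else v' with hζ
  have hζval : ∀ k, k < d → (ζ k).1 = p.getVert k := by
    intro k hk; rw [hζ]; simp [hk]
  have hζ0 : ζ 0 = v' := by
    rw [hζ]
    have h0 : (0:ℕ) < d := by omega
    simp only [dif_pos h0]
    apply Subtype.ext
    simp [p.getVert_zero, hv']
  have hζinj : ∀ k j, k < d → j < d → ζ k = ζ j → k = j := by
    intro k j hk hj h
    have hv : p.getVert k = p.getVert j := by
      rw [← hζval k hk, ← hζval j hj, h]
    have h1 := hzk_dist k (le_of_lt hk)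
    have h2 := hzk_dist j (le_of_lt hj)
    rw [hv] at h1
    omega
  set e := d - 1 with he
  set g : ℕ → ℝ := fun k => if k + 1 < d then W (ζ k) - W (ζ (k+1)) else W (ζ k) with hg
  have hge_val : g e = W (ζ e) := by
    rw [hg]; simp only; rw [if_neg (by omega)]
  have hgk_val : ∀ k, k < e → g k = W (ζ k) - W (ζ (k+1)) := by
    intro k hk; rw [hg]; simp only; rw [if_pos (by omega)]
  have htel : ∑ k ∈ Finset.range d, g k = W v' := by
    have hde : d = e + 1 := by omega
    rw [hde, Finset.sum_range_succ]
    rw [Finset.sum_congr rfl (fun k hk => hgk_val k (Finset.mem_range.1 hk)),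
      Finset.sum_range_sub']
    rw [hge_val, hζ0]
    ring
  have hζadj : ∀ k, k + 1 < d → G.Adj (ζ k).1 (ζ (k+1)).1 := by
    intro k hk
    rw [hζval k (by omega), hζval (k+1) hk]
    exact p.adj_getVert_succ (by omega)
  -- pair representation of Dsum
  set P : Finset (Aset × Aset) := Finset.univ.filter (fun q => G.Adj q.1.1 q.2.1) with hP
  have hDP : Dsum = ∑ q ∈ P, (W q.1 - W q.2)^2 := by
    have h1 : ∑ q ∈ P, (W q.1 - W q.2)^2 = ∑ x : Aset, ∑ y ∈ c x, (W x - W y)^2 := by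
      rw [hP, Finset.sum_filter, ← Finset.univ_product_univ, Finset.sum_product]
      exact Finset.sum_congr rfl fun x _ => (Finset.sum_filter _ _).symm
    rw [hDsum, ← h1]
  set φ : ℕ → Aset × Aset := fun k => (ζ k, ζ (k+1)) with hφ
  set ψ : ℕ → Aset × Aset := fun k => (ζ (k+1), ζ k) with hψ
  have hφinj : ∀ k ∈ Finset.range e, ∀ j ∈ Finset.range e, φ k = φ j → k = j := by
    intro k hk j hj h
    rw [Finset.mem_range] at hk hj
    exact hζinj k j (by omega) (by omega) (congrArg Prod.fst h)
  have hψinj : ∀ k ∈ Finset.range e, ∀ j ∈ Finset.range e, ψ k = ψ j → k = j := by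
    intro k hk j hj h
    rw [Finset.mem_range] at hk hj
    exact hζinj k j (by omega) (by omega) (congrArg Prod.snd h)
  have hTsub : (Finset.range e).image φ ∪ (Finset.range e).image ψ ⊆ P := by
    intro q hq
    rw [hP, Finset.mem_filter]
    refine ⟨Finset.mem_univ q, ?_⟩
    rcases Finset.mem_union.1 hq with hq | hq
    · obtain ⟨k, hk, rfl⟩ := Finset.mem_image.1 hq
      rw [Finset.mem_range] at hk
      exact hζadj k (by omega)
    · obtain ⟨k, hk, rfl⟩ := Finset.mem_image.1 hq
      rw [Finset.mem_range] at hk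
      exact (hζadj k (by omega)).symm
  have hdisj : Disjoint ((Finset.range e).image φ) ((Finset.range e).image ψ) := by
    rw [Finset.disjoint_left]
    intro q hqφ hqψ
    obtain ⟨k, hk, rfl⟩ := Finset.mem_image.1 hqφ
    obtain ⟨j, hj, hjq⟩ := Finset.mem_image.1 hqψ
    rw [Finset.mem_range] at hk hj
    have h1 : ζ (j+1) = ζ k := congrArg Prod.fst hjq
    have h2 : ζ j = ζ (k+1) := congrArg Prod.snd hjq
    have e1 := hζinj (j+1) k (by omega) (by omega) h1
    have e2 := hζinj j (k+1) (by omega) (by omega) h2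
    omega
  have hsumφ : ∑ q ∈ (Finset.range e).image φ, (W q.1 - W q.2)^2
      = ∑ k ∈ Finset.range e, (g k)^2 := by
    rw [Finset.sum_image hφinj]
    exact Finset.sum_congr rfl fun k hk => by
      rw [hgk_val k (Finset.mem_range.1 hk)]
  have hsumψ : ∑ q ∈ (Finset.range e).image ψ, (W q.1 - W q.2)^2
      = ∑ k ∈ Finset.range e, (g k)^2 := by
    rw [Finset.sum_image hψinj]
    exact Finset.sum_congr rfl fun k hk => by
      rw [hgk_val k (Finset.mem_range.1 hk)]; ring
  have hDge : 2 * ∑ k ∈ Finset.range e, (g k)^2 ≤ Dsum := by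
    rw [hDP]
    calc 2 * ∑ k ∈ Finset.range e, (g k)^2
        = ∑ q ∈ (Finset.range e).image φ ∪ (Finset.range e).image ψ, (W q.1 - W q.2)^2 := by
          rw [Finset.sum_union hdisj, hsumφ, hsumψ]; ring
      _ ≤ ∑ q ∈ P, (W q.1 - W q.2)^2 :=
          Finset.sum_le_sum_of_subset_of_nonneg hTsub (fun _ _ _ => sq_nonneg _)
  -- slack at the last geodesic vertex
  have hadj_u : G.Adj (ζ e).1 u₀ := by
    rw [hζval e (by omega)]
    have hlast : p.getVert (e+1) = u₀ := by
      have : e + 1 = p.length := by omega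
      rw [this]
      exact p.getVert_length
    have := p.adj_getVert_succ (show e < p.length by omega)
    rwa [hlast] at this
  have hslacke : (1:ℝ) ≤ (G.degree (ζ e).1 : ℝ) - ((c (ζ e)).card : ℝ) := by
    have hmemu : u₀ ∈ G.neighborFinset (ζ e).1 := by
      rw [SimpleGraph.mem_neighborFinset]; exact hadj_u
    have hsub2 : (c (ζ e)).image (fun y : Aset => y.1) ⊆
        (G.neighborFinset (ζ e).1).erase u₀ := by
      intro y hy
      obtain ⟨y', hy', rfl⟩ := Finset.mem_image.1 hy
      rw [Finset.mem_erase, SimpleGraph.mem_neighborFinset]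
      exact ⟨y'.2.2, (Finset.mem_filter.1 hy').2⟩
    have hc1 : (c (ζ e)).card ≤ ((G.neighborFinset (ζ e).1).erase u₀).card := by
      rw [← Finset.card_image_of_injOn Subtype.val_injective.injOn]
      exact Finset.card_le_card hsub2
    rw [Finset.card_erase_of_mem hmemu, SimpleGraph.card_neighborFinset_eq_degree] at hc1
    have hdeg1 : 1 ≤ G.degree (ζ e).1 := by
      have := Finset.card_pos.2 ⟨u₀, hmemu⟩
      rwa [SimpleGraph.card_neighborFinset_eq_degree] at this
    have : (c (ζ e)).card + 1 ≤ G.degree (ζ e).1 := by omega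
    have hcast : ((c (ζ e)).card : ℝ) + 1 ≤ (G.degree (ζ e).1 : ℝ) := by exact_mod_cast this
    linarith
  have hSl_ge : (g e)^2 ≤ Slsum := by
    rw [hge_val, hSlsum]
    have h0 : ∀ x : Aset, 0 ≤ ((G.degree x.1:ℝ) - ((c x).card:ℝ)) * W x ^2 := by
      intro x
      apply mul_nonneg _ (sq_nonneg _)
      have := hcard x
      have : ((c x).card : ℝ) ≤ (G.degree x.1 : ℝ) := by exact_mod_cast this
      linarith
    calc (W (ζ e))^2 = 1 * (W (ζ e))^2 := by ring
      _ ≤ ((G.degree (ζ e).1:ℝ) - ((c (ζ e)).card:ℝ)) * W (ζ e) ^2 :=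
          mul_le_mul_of_nonneg_right hslacke (sq_nonneg _)
      _ ≤ Slsum := by
          rw [hSlsum]
          exact Finset.single_le_sum (fun i _ => h0 i) (Finset.mem_univ (ζ e))
  have hsum_sq_le : ∑ k ∈ Finset.range d, (g k)^2 ≤ W v' := by
    have hde : d = e + 1 := by omega
    rw [hde, Finset.sum_range_succ]
    linarith [hDge, hSl_ge, henergy]
  have hCS := sq_sum_le_card_mul_sum_sq (s := Finset.range d) (f := g)
  rw [Finset.card_range, htel] at hCS
  have hWv'le : W v' ≤ (d:ℝ) := by
    rcases eq_or_lt_of_le (hWpos v') with h|h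
    · rw [← h]; positivity
    · have h1 : W v' * W v' ≤ (d:ℝ) * W v' := by
        have h2 := mul_le_mul_of_nonneg_left hsum_sq_le (show (0:ℝ) ≤ (d:ℝ) by positivity)
        calc W v' * W v' = (W v')^2 := by ring
          _ ≤ (d:ℝ) * ∑ k ∈ Finset.range d, g k ^ 2 := hCS
          _ ≤ (d:ℝ) * W v' := h2
      exact le_of_mul_le_mul_right h1 h
  -- package
  refine ⟨fun x => if h : x ∈ Aset then W ⟨x, h⟩ else 0, ?_, ?_, ?_, ?_⟩
  · intro x
    by_cases h : x ∈ Aset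
    · simp only [dif_pos h]; exact hWpos _
    · simp only [dif_neg h]
      exact le_rfl
  · intro x hx
    have hxA : x ∉ Aset := hx
    simp only [dif_neg hxA]
  · intro x hdx hxu
    have hxA : x ∈ Aset := ⟨hdx, hxu⟩
    simp only [dif_pos hxA]
    have hb := hWb' ⟨x, hxA⟩
    have hδx : δ ⟨x, hxA⟩ = (if x = v₀ then (1:ℝ) else 0) := by
      show (if (⟨x, hxA⟩ : Aset) = v' then (1:ℝ) else 0) = (if x = v₀ then (1:ℝ) else 0)
      by_cases hxv : x = v₀
      · rw [if_pos hxv, if_pos (show (⟨x, hxA⟩ : Aset) = v' from Subtype.ext hxv)]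
      · rw [if_neg hxv, if_neg (show ¬ (⟨x, hxA⟩ : Aset) = v' from
          fun hcon => hxv (congrArg Subtype.val hcon))]
    have hsum : ∑ y ∈ c ⟨x, hxA⟩, W y =
        ∑ y ∈ (G.neighborFinset x).filter (fun y => G.dist v₀ y ≤ R ∧ y ≠ u₀),
          (if h : y ∈ Aset then W ⟨y, h⟩ else 0) := by
      refine Finset.sum_bij' (fun (y : Aset) (_ : y ∈ c ⟨x,hxA⟩) => y.1)
        (fun y hy => ⟨y, ⟨(Finset.mem_filter.1 hy).2.1, (Finset.mem_filter.1 hy).2.2⟩⟩)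
        ?_ ?_ ?_ ?_ ?_
      · intro y hy
        rw [Finset.mem_filter, SimpleGraph.mem_neighborFinset]
        exact ⟨(Finset.mem_filter.1 hy).2, y.2.1, y.2.2⟩
      · intro y hy
        rw [hc]
        rw [Finset.mem_filter]
        refine ⟨Finset.mem_univ _, ?_⟩
        have := (Finset.mem_filter.1 hy).1
        rwa [SimpleGraph.mem_neighborFinset] at this
      · intro y hy
        rfl
      · intro y hy
        rfl
      · intro y hy
        simp only [dif_pos (Subtype.coe_prop y)]
    rw [← hδx, ← hsum]
    linarith [hb]
  · simp only [dif_pos hv₀A]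
    exact hWv'le
lemma F_le (hG : G.Connected) (hne : v₀ ≠ u₀) (N : ℕ) :
    F G v₀ u₀ N v₀ ≤ (G.degree v₀ : ℝ≥0∞) * (G.dist v₀ u₀ : ℝ≥0∞) := by
  classical
  set d := G.dist v₀ u₀ with hd
  set R := N + d + 1 with hR
  obtain ⟨W, hWpos, hWzero, hWeq, hWle⟩ := exists_W G v₀ u₀ hG hne R (by omega)
  set cdeg : ℝ≥0∞ := (G.degree v₀ : ℝ≥0∞) with hcdeg
  set U : V → ℝ≥0∞ := fun x => cdeg * ENNReal.ofReal (W x) with hU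
  have hUv₀ : ∀ x, (if x = v₀ then (1:ℝ≥0∞) else 0) ≤ U x := by
    intro x
    by_cases hx : x = v₀
    · rw [if_pos hx, hx]
      have h1 : (1:ℝ) ≤ (G.degree v₀:ℝ) * W v₀ := by
        rw [hWeq v₀ (by simp [SimpleGraph.dist_self]) hne, if_pos rfl]
        have h2 : (0:ℝ) ≤ ∑ y ∈ (G.neighborFinset v₀).filter
            (fun y => G.dist v₀ y ≤ R ∧ y ≠ u₀), W y :=
          Finset.sum_nonneg fun y _ => hWpos y
        linarith
      calc (1:ℝ≥0∞) = ENNReal.ofReal 1 := by simp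
        _ ≤ ENNReal.ofReal ((G.degree v₀:ℝ) * W v₀) := ENNReal.ofReal_le_ofReal h1
        _ = ENNReal.ofReal ((G.degree v₀:ℝ)) * ENNReal.ofReal (W v₀) :=
            ENNReal.ofReal_mul (by positivity)
        _ = U v₀ := by rw [hU, hcdeg, ENNReal.ofReal_natCast]
    · rw [if_neg hx]
      exact zero_le
  have key : ∀ n, n ≤ N → ∀ x, F G v₀ u₀ n x ≤ U x := by
    intro n
    induction n with
    | zero =>
      intro _ x
      by_cases hx : x = v₀
      · calc F G v₀ u₀ 0 x = (if x = v₀ then (1:ℝ≥0∞) else 0) := by simp [F]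
          _ ≤ U x := hUv₀ x
      · simp only [F, if_neg hx]
        exact zero_le
    | succ n ih =>
      intro hn1 x
      by_cases hxu : x = u₀
      · rw [hxu, F_u₀ G v₀ u₀ hne]
        exact zero_le
      by_cases hdx : G.dist v₀ x ≤ R
      · -- main case
        have hxA : x ∈ ({x : V | G.dist v₀ x ≤ R ∧ x ≠ u₀}) := ⟨hdx, hxu⟩
        set Pred : V → Prop := fun y => G.dist v₀ y ≤ R ∧ y ≠ u₀ with hPred
        have hsum0 : ∑ y ∈ (G.neighborFinset x).filter (fun y => ¬ Pred y),
            F G v₀ u₀ n y = 0 := by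
          apply Finset.sum_eq_zero
          intro y hy
          have hny := (Finset.mem_filter.1 hy).2
          simp only [hPred] at hny
          push_neg at hny
          by_cases hyu : y = u₀
          · rw [hyu]; exact F_u₀ G v₀ u₀ hne n
          · have hdy : ¬ G.dist v₀ y ≤ R := fun hcon => hyu (hny hcon)
            by_contra hF0
            exact hdy (le_trans (F_pos_dist G v₀ u₀ hG hne n y hF0) (by omega))
        have hsplit : ∑ y ∈ G.neighborFinset x, F G v₀ u₀ n y =
            ∑ y ∈ (G.neighborFinset x).filter Pred, F G v₀ u₀ n y := by
          rw [← Finset.sum_filter_add_sum_filter_not (G.neighborFinset x) Pred, hsum0,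
            add_zero]
        have hsum1 : ∑ y ∈ (G.neighborFinset x).filter Pred, F G v₀ u₀ n y ≤
            ∑ y ∈ (G.neighborFinset x).filter Pred, U y :=
          Finset.sum_le_sum fun y _ => ih (by omega) y
        have hsum2 : ∑ y ∈ (G.neighborFinset x).filter Pred, U y =
            cdeg * ENNReal.ofReal (∑ y ∈ (G.neighborFinset x).filter Pred, W y) := by
          rw [ENNReal.ofReal_sum_of_nonneg (fun y _ => hWpos y), Finset.mul_sum]
        set S : ℝ := ∑ y ∈ (G.neighborFinset x).filter Pred, W y with hS
        have hWx : (G.degree x : ℝ) * W x = (if x = v₀ then 1 else 0) + S :=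
          hWeq x hdx hxu
        set Dx : ℝ≥0∞ := (G.degree x : ℝ≥0∞) with hDx
        have hdegx : 0 < G.degree x := deg_pos G v₀ u₀ hG hne x
        have hDx0 : Dx ≠ 0 := by
          rw [hDx]; exact Nat.cast_ne_zero.2 (by omega)
        have hDxt : Dx ≠ ⊤ := by rw [hDx]; exact ENNReal.natCast_ne_top _
        have hFx : F G v₀ u₀ (n+1) x =
            (if x = v₀ then (1:ℝ≥0∞) else 0) +
              Dx⁻¹ * ∑ y ∈ G.neighborFinset x, F G v₀ u₀ n y := by
          simp only [F, if_neg hxu, hDx]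
        have hstep : F G v₀ u₀ (n+1) x ≤
            (if x = v₀ then (1:ℝ≥0∞) else 0) + Dx⁻¹ * (cdeg * ENNReal.ofReal S) := by
          rw [hFx, hsplit]
          exact add_le_add_right (mul_le_mul_right (le_trans hsum1 (le_of_eq hsum2)) _) _
        refine le_trans hstep ?_
        rw [← ENNReal.mul_le_mul_iff_right hDx0 hDxt]
        rw [mul_add, ← mul_assoc Dx Dx⁻¹, ENNReal.mul_inv_cancel hDx0 hDxt, one_mul]
        have hkey : Dx * ENNReal.ofReal (W x) =
            ENNReal.ofReal (if x = v₀ then (1:ℝ) else 0) + ENNReal.ofReal S := by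
          rw [hDx, ← ENNReal.ofReal_natCast (G.degree x),
            ← ENNReal.ofReal_mul (by positivity), hWx,
            ENNReal.ofReal_add (by split <;> norm_num)
              (Finset.sum_nonneg fun y _ => hWpos y)]
        have hUx : Dx * U x = cdeg * ENNReal.ofReal (if x = v₀ then (1:ℝ) else 0) +
            cdeg * ENNReal.ofReal S := by
          simp only [hU]
          rw [mul_left_comm, hkey, mul_add]
        rw [hUx]
        refine add_le_add_left ?_ _
        by_cases hx : x = v₀
        · rw [if_pos hx, if_pos hx, mul_one, ENNReal.ofReal_one, mul_one, hDx, hcdeg, hx]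
        · rw [if_neg hx, if_neg hx, mul_zero, ENNReal.ofReal_zero, mul_zero]
      · -- far away
        have hF0 : F G v₀ u₀ (n+1) x = 0 := by
          by_contra h
          exact hdx (le_trans (F_pos_dist G v₀ u₀ hG hne (n+1) x h) (by omega))
        rw [hF0]
        exact zero_le
  calc F G v₀ u₀ N v₀ ≤ U v₀ := key N le_rfl v₀
    _ ≤ cdeg * (d : ℝ≥0∞) := by
        rw [hU]
        apply mul_le_mul_right
        calc ENNReal.ofReal (W v₀) ≤ ENNReal.ofReal (d:ℝ) := ENNReal.ofReal_le_ofReal hWle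
          _ = (d : ℝ≥0∞) := ENNReal.ofReal_natCast d
    _ = (G.degree v₀ : ℝ≥0∞) * (G.dist v₀ u₀ : ℝ≥0∞) := by rw [hcdeg, hd]
end CWA
/-- For a connected locally finite graph `G` and distinct vertices `v₀ ≠ u₀`, the weighted
sum over closed walks from `v₀` that avoid `u₀` is at most `σ_{v₀} · d_G(v₀,u₀)`. -/
theorem closed_walks_avoiding_le (G : SimpleGraph V) [G.LocallyFinite] (hG : G.Connected)
    (v₀ u₀ : V) (hne : v₀ ≠ u₀) :
    ∑' ω : {ω : G.Walk v₀ v₀ // u₀ ∉ ω.support}, wgt G ω.1 ≤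
      (G.degree v₀ : ℝ≥0∞) * (G.dist v₀ u₀ : ℝ≥0∞) := by
  classical
  rw [ENNReal.tsum_eq_iSup_sum]
  refine iSup_le fun s => ?_
  have hinj : ∀ a ∈ s, ∀ b ∈ s, (a : G.Walk v₀ v₀) = b → a = b :=
    fun a _ b _ h => Subtype.ext h
  set s' : Finset (G.Walk v₀ v₀) := s.image Subtype.val with hs'
  have hsum : ∑ ω ∈ s, wgt G ω.1 = ∑ p ∈ s', wgt G p := by
    rw [hs', Finset.sum_image hinj]
  set N := s'.sup (fun p => p.length) with hN
  rw [hsum]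
  refine le_trans (CWA.claimA G v₀ u₀ N v₀ s' ?_ ?_) (CWA.F_le G v₀ u₀ hG hne N)
  · intro p hp
    obtain ⟨ω, hω, rfl⟩ := Finset.mem_image.1 hp
    exact ω.2
  · intro p hp
    exact Finset.le_sup hp
end

section
/- Let H be a finite connected graph and v_0, v_1 two distinct vertices of H. Let C = sum over all walks omega from v_0 to v_1 of length at least 1 whose intermediate vertices avoid both v_0 and v_1, of sigma_{v_0} * p_H(omega), and let R = sum over all closed walks omega from v_0 to v_0 (including the trivial walk) that do not visit v_1, of sigma_{v_0}^{-1} * p_H(omega). Then both sums are finite and C * R = 1. -/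
open scoped ENNReal

variable {V : Type*}

namespace CRaux

open SimpleGraph Finset

variable (H : SimpleGraph V) [H.LocallyFinite]

@[simp] lemma wgt_nil {u : V} : wgt H (SimpleGraph.Walk.nil : H.Walk u u) = 1 := by
  simp [wgt]

@[simp] lemma wgt_cons {u v w : V} (h : H.Adj u v) (p : H.Walk v w) :
    wgt H (p.cons h) = ((H.degree u : ℝ≥0∞))⁻¹ * wgt H p := by
  rw [wgt, wgt, Walk.support_cons, List.dropLast_cons_of_ne_nil p.support_ne_nil]
  simp

lemma wgt_append {u v w : V} (p : H.Walk u v) (q : H.Walk v w) :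
    wgt H (p.append q) = wgt H p * wgt H q := by
  induction p with
  | nil => simp
  | cons h p ih => rw [Walk.cons_append, wgt_cons, wgt_cons, ih, mul_assoc]

lemma wgt_ne_zero (hd : ∀ x : V, H.degree x ≠ 0) {u v : V} (p : H.Walk u v) :
    wgt H p ≠ 0 := by
  induction p with
  | nil => simp
  | cons h p ih =>
    rw [wgt_cons]
    exact mul_ne_zero (ENNReal.inv_ne_zero.2 (ENNReal.natCast_ne_top _)) ih

variable [Fintype V] [DecidableEq V]

lemma step_sum {u : V} (hd : H.degree u ≠ 0) :
    ∑ _w : H.neighborSet u, ((H.degree u : ℝ≥0∞))⁻¹ = 1 := by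
  rw [Finset.sum_const, card_univ, H.card_neighborSet_eq_degree, nsmul_eq_mul,
    ENNReal.mul_inv_cancel (by exact_mod_cast hd) (ENNReal.natCast_ne_top _)]

lemma sum_walkLength_succ (n : ℕ) (u v : V) (f : H.Walk u v → ℝ≥0∞) :
    ∑ ω ∈ H.finsetWalkLength (n + 1) u v, f ω
      = ∑ w : H.neighborSet u, ∑ ω ∈ H.finsetWalkLength n w v, f (ω.cons ((H.mem_neighborSet u w).1 w.2)) := by
  have hdef : H.finsetWalkLength (n + 1) u v
      = Finset.univ.biUnion fun (w : H.neighborSet u) =>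
        (H.finsetWalkLength n w v).map ⟨fun p => Walk.cons w.property p, fun _ _ h => by injection h⟩ :=
    rfl
  rw [hdef, Finset.sum_biUnion]
  · exact Finset.sum_congr rfl fun w _ => Finset.sum_map _ _ _
  · intro w _ w' _ hne
    refine Finset.disjoint_left.2 fun ω hω hω' => hne ?_
    obtain ⟨p, _, rfl⟩ := Finset.mem_map.1 hω
    obtain ⟨p', _, he⟩ := Finset.mem_map.1 hω'
    have hs := congrArg Walk.support he
    change u :: p'.support = u :: p.support at hs
    have h1 := congrArg (fun l => l.tail.head?) hs
    rw [p'.support_eq_cons, p.support_eq_cons] at h1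
    simp only [List.tail_cons, List.head?_cons, Option.some.injEq] at h1
    exact Subtype.ext h1.symm

/-- total mass of walks of length `n` starting at `u` -/
noncomputable def fm (n : ℕ) (u : V) : ℝ≥0∞ :=
  ∑ v : V, ∑ ω ∈ H.finsetWalkLength n u v, wgt H ω

/-- mass of walks of length `n` starting at `u` avoiding `v₁` -/
noncomputable def am (v₁ : V) (n : ℕ) (u : V) : ℝ≥0∞ :=
  ∑ v : V, ∑ ω ∈ (H.finsetWalkLength n u v).filter (fun ω => v₁ ∉ ω.support), wgt H ω

/-- mass of walks of length `n` from `u` to `v₁` hitting `v₁` only at the end -/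
noncomputable def hitm (u v₁ : V) (n : ℕ) : ℝ≥0∞ :=
  ∑ ω ∈ (H.finsetWalkLength n u v₁).filter (fun ω => v₁ ∉ ω.support.dropLast), wgt H ω

lemma walkLength_zero_self (u : V) : H.finsetWalkLength 0 u u = {SimpleGraph.Walk.nil} := by
  ext ω
  rw [mem_finsetWalkLength_iff, Finset.mem_singleton]
  constructor
  · intro h; cases ω with
    | nil => rfl
    | cons h p => simp at h
  · rintro rfl; rfl

lemma walkLength_zero_ne {u v : V} (h : u ≠ v) : H.finsetWalkLength 0 u v = ∅ := by
  ext ω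
  rw [mem_finsetWalkLength_iff]
  simp only [Finset.notMem_empty, iff_false]
  exact fun hl => h (Walk.eq_of_length_eq_zero hl)

lemma fm_zero (u : V) : fm H 0 u = 1 := by
  rw [fm, Finset.sum_eq_single u]
  · rw [walkLength_zero_self]; simp
  · intro v _ hv; rw [walkLength_zero_ne H (Ne.symm hv)]; simp
  · simp

lemma fm_succ (n : ℕ) (u : V) :
    fm H (n + 1) u = ∑ w : H.neighborSet u, ((H.degree u : ℝ≥0∞))⁻¹ * fm H n w := by
  rw [fm]
  simp only [sum_walkLength_succ, wgt_cons]
  rw [Finset.sum_comm]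
  simp [fm, Finset.mul_sum]

lemma fm_one (hd : ∀ x : V, H.degree x ≠ 0) (n : ℕ) (u : V) : fm H n u = 1 := by
  induction n generalizing u with
  | zero => exact fm_zero H u
  | succ n ih =>
    rw [fm_succ]
    simp only [ih]
    simpa using step_sum H (hd u)

lemma am_start (v₁ : V) (n : ℕ) : am H v₁ n v₁ = 0 := by
  rw [am]
  refine Finset.sum_eq_zero fun v _ => Finset.sum_eq_zero fun ω hω =>
    absurd ω.start_mem_support (Finset.mem_filter.1 hω).2

lemma am_zero {v₁ u : V} (h : u ≠ v₁) : am H v₁ 0 u = 1 := by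
  rw [am, Finset.sum_eq_single u]
  · rw [walkLength_zero_self]
    rw [Finset.filter_true_of_mem (fun ω hω => ?_)]
    · simp
    · rw [Finset.mem_singleton] at hω
      subst hω
      simp [Ne.symm h]
  · intro v _ hv; rw [walkLength_zero_ne H (Ne.symm hv)]; simp
  · simp

lemma am_def (v₁ : V) (n : ℕ) (u : V) : am H v₁ n u =
    ∑ v : V, ∑ ω ∈ (H.finsetWalkLength n u v).filter (fun ω => v₁ ∉ ω.support), wgt H ω := rfl

set_option maxHeartbeats 1000000 in
lemma am_succ {v₁ u : V} (h : u ≠ v₁) (n : ℕ) :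
    am H v₁ (n + 1) u = ∑ w : H.neighborSet u, ((H.degree u : ℝ≥0∞))⁻¹ * am H v₁ n w := by
  have key : ∀ (v : V),
      ∑ ω ∈ (H.finsetWalkLength (n+1) u v).filter (fun ω => v₁ ∉ ω.support), wgt H ω
        = ∑ w : H.neighborSet u, ((H.degree u : ℝ≥0∞))⁻¹ *
            ∑ ω ∈ (H.finsetWalkLength n w v).filter (fun ω => v₁ ∉ ω.support), wgt H ω := by
    intro v
    rw [Finset.sum_filter, sum_walkLength_succ H n u v
      (fun ω => if v₁ ∉ ω.support then wgt H ω else 0)]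
    refine Finset.sum_congr rfl fun w _ => ?_
    rw [Finset.mul_sum, Finset.sum_filter]
    refine Finset.sum_congr rfl fun ω _ => ?_
    rw [Walk.support_cons]
    by_cases hv : v₁ ∈ ω.support
    · simp [hv]
    · simp [hv, Ne.symm h]
  rw [am_def]
  simp only [key]
  rw [Finset.sum_comm]
  refine Finset.sum_congr rfl fun w _ => ?_
  rw [← Finset.mul_sum, am_def]

lemma am_le_fm (v₁ : V) (n : ℕ) (u : V) : am H v₁ n u ≤ fm H n u :=
  Finset.sum_le_sum fun v _ => Finset.sum_le_sum_of_subset (Finset.filter_subset _ _)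

lemma am_le_one (hd : ∀ x : V, H.degree x ≠ 0) (v₁ : V) (n : ℕ) (u : V) :
    am H v₁ n u ≤ 1 :=
  (am_le_fm H v₁ n u).trans_eq (fm_one H hd n u)

lemma am_submul (v₁ : V) (b : ℝ≥0∞) (n : ℕ) (hb : ∀ w, am H v₁ n w ≤ b)
    (hb1 : b ≤ 1) (hd : ∀ x : V, H.degree x ≠ 0) :
    ∀ (m : ℕ) (u : V), am H v₁ (m + n) u ≤ am H v₁ m u * b := by
  intro m
  induction m with
  | zero =>
    intro u
    by_cases h : u = v₁
    · subst h; simp [am_start]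
    · rw [zero_add, am_zero H h, one_mul]; exact hb u
  | succ m ih =>
    intro u
    by_cases h : u = v₁
    · subst h; simp [am_start]
    · rw [show m + 1 + n = (m + n) + 1 by omega, am_succ H h, am_succ H h, Finset.sum_mul]
      refine Finset.sum_le_sum fun w _ => ?_
      rw [mul_assoc]
      exact mul_le_mul_right (ih w) _
lemma hitm_self_zero (v₁ : V) : hitm H v₁ v₁ 0 = 1 := by
  rw [hitm, walkLength_zero_self, Finset.filter_true_of_mem (fun ω hω => ?_)]
  · simp
  · rw [Finset.mem_singleton] at hω; subst hω; simp

lemma hitm_self_succ (v₁ : V) (m : ℕ) : hitm H v₁ v₁ (m + 1) = 0 := by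
  rw [hitm]
  refine Finset.sum_eq_zero fun ω hω => absurd ?_ (Finset.mem_filter.1 hω).2.elim
  have hlen : ω.length = m + 1 := mem_finsetWalkLength_iff.1 (Finset.mem_filter.1 hω).1
  have htail : ω.support.tail ≠ [] := by
    have h1 : ω.support.tail.length = m + 1 := by
      rw [List.length_tail, ω.length_support, hlen]
      omega
    intro hnil
    rw [hnil] at h1
    simp at h1
  rw [ω.support_eq_cons, List.dropLast_cons_of_ne_nil htail]
  exact List.mem_cons_self

lemma hitm_zero {u v₁ : V} (h : u ≠ v₁) : hitm H u v₁ 0 = 0 := by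
  rw [hitm, walkLength_zero_ne H h]; simp

lemma hitm_succ {u v₁ : V} (h : u ≠ v₁) (n : ℕ) :
    hitm H u v₁ (n + 1) = ∑ w : H.neighborSet u, ((H.degree u : ℝ≥0∞))⁻¹ * hitm H w v₁ n := by
  rw [hitm, Finset.sum_filter, sum_walkLength_succ H n u v₁
    (fun ω => if v₁ ∉ ω.support.dropLast then wgt H ω else 0)]
  refine Finset.sum_congr rfl fun w _ => ?_
  rw [hitm, Finset.mul_sum, Finset.sum_filter]
  refine Finset.sum_congr rfl fun ω _ => ?_
  rw [Walk.support_cons, List.dropLast_cons_of_ne_nil ω.support_ne_nil]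
  by_cases hv : v₁ ∈ ω.support.dropLast
  · simp [hv]
  · simp [hv, Ne.symm h]

lemma am_add_hit (hd : ∀ x : V, H.degree x ≠ 0) (v₁ : V) :
    ∀ (n : ℕ) (u : V), am H v₁ n u + ∑ m ∈ Finset.range (n + 1), hitm H u v₁ m = 1 := by
  intro n
  induction n with
  | zero =>
    intro u
    by_cases h : u = v₁
    · subst h; rw [am_start]; simp [hitm_self_zero]
    · rw [am_zero H h]; simp [hitm_zero H h]
  | succ n ih =>
    intro u
    by_cases h : u = v₁
    · subst h
      rw [am_start, Finset.sum_range_succ', hitm_self_zero]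
      simp [hitm_self_succ]
    · have hsplit : ∑ m ∈ Finset.range (n + 1 + 1), hitm H u v₁ m
          = ∑ m ∈ Finset.range (n + 1),
              ∑ w : H.neighborSet u, ((H.degree u : ℝ≥0∞))⁻¹ * hitm H (w : V) v₁ m := by
        rw [Finset.sum_range_succ', hitm_zero H h, add_zero]
        exact Finset.sum_congr rfl fun m _ => hitm_succ H h m
      rw [am_succ H h, hsplit, Finset.sum_comm, ← Finset.sum_add_distrib]
      have key : ∀ w ∈ (Finset.univ : Finset (H.neighborSet u)),
          ((H.degree u : ℝ≥0∞))⁻¹ * am H v₁ n w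
            + ∑ m ∈ Finset.range (n + 1), ((H.degree u : ℝ≥0∞))⁻¹ * hitm H (w : V) v₁ m
          = ((H.degree u : ℝ≥0∞))⁻¹ := fun w _ => by
        rw [← Finset.mul_sum, ← mul_add, ih w, mul_one]
      rw [Finset.sum_congr rfl key]
      exact step_sum H (hd u)
lemma exists_walk_of_length (hd : ∀ x : V, H.degree x ≠ 0) :
    ∀ (m : ℕ) (z : V), ∃ y : V, ∃ q : H.Walk z y, q.length = m := by
  intro m
  induction m with
  | zero => exact fun z => ⟨z, .nil, rfl⟩
  | succ m ih =>
    intro z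
    obtain ⟨y, q, hq⟩ := ih z
    obtain ⟨w, hw⟩ := (H.degree_pos_iff_exists_adj y).1 (Nat.pos_of_ne_zero (hd y))
    exact ⟨w, q.concat hw, by rw [Walk.length_concat, hq]⟩

lemma am_card_lt_one (hd : ∀ x : V, H.degree x ≠ 0) (hH : H.Connected) (v₁ u : V) :
    am H v₁ (Fintype.card V) u < 1 := by
  by_cases h : u = v₁
  · subst h; rw [am_start]; exact zero_lt_one
  obtain ⟨pw⟩ := hH.preconnected u v₁
  set p := pw.toPath with hp
  have hlen : p.1.length < Fintype.card V := p.2.length_lt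
  obtain ⟨y, q, hq⟩ := exists_walk_of_length H hd (Fintype.card V - p.1.length) v₁
  set ω₀ : H.Walk u y := p.1.append q with hω₀
  have hlω : ω₀.length = Fintype.card V := by
    rw [hω₀, Walk.length_append, hq, Nat.add_sub_cancel' hlen.le]
  have hmem : v₁ ∈ ω₀.support := (Walk.mem_support_append_iff _ _).2 (Or.inl p.1.end_mem_support)
  set K := Fintype.card V
  have hsplit : fm H K u = am H v₁ K u
      + ∑ v : V, ∑ ω ∈ (H.finsetWalkLength K u v).filter (fun ω => ¬ v₁ ∉ ω.support), wgt H ω := by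
    rw [fm, am_def, ← Finset.sum_add_distrib]
    exact Finset.sum_congr rfl fun v _ => (Finset.sum_filter_add_sum_filter_not _ _ _).symm
  have hone : wgt H ω₀ ≤
      ∑ v : V, ∑ ω ∈ (H.finsetWalkLength K u v).filter (fun ω => ¬ v₁ ∉ ω.support), wgt H ω := by
    refine le_trans ?_ (Finset.single_le_sum (fun v _ => zero_le) (Finset.mem_univ y))
    refine Finset.single_le_sum (fun _ _ => zero_le) ?_
    exact Finset.mem_filter.2 ⟨mem_finsetWalkLength_iff.2 hlω, by simpa using hmem⟩
  have hle : am H v₁ K u + wgt H ω₀ ≤ 1 := by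
    calc am H v₁ K u + wgt H ω₀ ≤ fm H K u := hsplit ▸ add_le_add_right hone _
    _ = 1 := fm_one H hd K u
  refine lt_of_lt_of_le ?_ hle
  exact ENNReal.lt_add_right
    (ne_top_of_le_ne_top ENNReal.one_ne_top (am_le_one H hd v₁ K u)) (wgt_ne_zero H hd ω₀)

lemma tsum_hit (v₀ v₁ : V) :
    ∑' (ω : {ω : H.Walk v₀ v₁ // v₁ ∉ ω.support.dropLast}), wgt H ω.1
      = ∑' n : ℕ, hitm H v₀ v₁ n := by
  classical
  let e : (Σ n : ℕ, {ω : H.Walk v₀ v₁ // (v₁ ∉ ω.support.dropLast) ∧ ω.length = n})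
      ≃ {ω : H.Walk v₀ v₁ // v₁ ∉ ω.support.dropLast} :=
    { toFun := fun x => ⟨x.2.1, x.2.2.1⟩
      invFun := fun ω => ⟨ω.1.length, ω.1, ω.2, rfl⟩
      left_inv := fun ⟨n, ω, h, hl⟩ => by subst hl; rfl
      right_inv := fun ω => rfl }
  rw [← Equiv.tsum_eq e (fun ω => wgt H ω.1), ENNReal.tsum_sigma']
  refine tsum_congr fun n => ?_
  let e2 : {ω : H.Walk v₀ v₁ // (v₁ ∉ ω.support.dropLast) ∧ ω.length = n}
      ≃ {ω : H.Walk v₀ v₁ //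
          ω ∈ (H.finsetWalkLength n v₀ v₁).filter (fun ω => v₁ ∉ ω.support.dropLast)} :=
    Equiv.subtypeEquivRight fun ω => by
      rw [Finset.mem_filter, mem_finsetWalkLength_iff]; tauto
  show ∑' (b : {ω : H.Walk v₀ v₁ // (v₁ ∉ ω.support.dropLast) ∧ ω.length = n}),
      wgt H ((e ⟨n, b⟩) : H.Walk v₀ v₁) = _
  have h3 : ∀ b : {ω : H.Walk v₀ v₁ // (v₁ ∉ ω.support.dropLast) ∧ ω.length = n},
      wgt H ((e ⟨n, b⟩) : H.Walk v₀ v₁) = wgt H ((e2 b : {ω : H.Walk v₀ v₁ //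
        ω ∈ (H.finsetWalkLength n v₀ v₁).filter (fun ω => v₁ ∉ ω.support.dropLast)}) :
          H.Walk v₀ v₁) := fun b => rfl
  rw [tsum_congr h3, Equiv.tsum_eq e2 (fun ω => wgt H ω.1)]
  exact Finset.tsum_subtype _ (wgt H)

lemma tsum_first_hit (hd : ∀ x : V, H.degree x ≠ 0) (hH : H.Connected) (v₀ v₁ : V) :
    ∑' (ω : {ω : H.Walk v₀ v₁ // v₁ ∉ ω.support.dropLast}), wgt H ω.1 = 1 := by
  rw [tsum_hit]
  set K := Fintype.card V with hK
  set b := Finset.univ.sup (am H v₁ K) with hb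
  have hub : ∀ u, am H v₁ K u ≤ b := fun u => Finset.le_sup (Finset.mem_univ u)
  have hb1 : b < 1 :=
    Finset.sup_lt_iff (by norm_num) |>.2 fun u _ => am_card_lt_one H hd hH v₁ u
  have hpow : ∀ (j : ℕ) (u : V), am H v₁ (j * K) u ≤ b ^ j := by
    intro j
    induction j with
    | zero => intro u; simpa using am_le_one H hd v₁ 0 u
    | succ j ih =>
      intro u
      have h1 : am H v₁ (j * K + K) u ≤ am H v₁ (j * K) u * b :=
        am_submul H v₁ b K hub hb1.le hd (j * K) u
      calc am H v₁ ((j + 1) * K) u = am H v₁ (j * K + K) u := by ring_nf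
      _ ≤ am H v₁ (j * K) u * b := h1
      _ ≤ b ^ j * b := mul_le_mul_left (ih u) b
      _ = b ^ (j + 1) := (pow_succ b j).symm
  apply le_antisymm
  · rw [ENNReal.tsum_eq_iSup_nat]
    refine iSup_le fun N => ?_
    cases N with
    | zero => simp
    | succ n => exact le_add_self.trans_eq (am_add_hit H hd v₁ n v₀)
  · refine ENNReal.le_of_forall_pos_le_add fun ε hε _ => ?_
    obtain ⟨j, hj⟩ : ∃ j : ℕ, b ^ j < (ε : ℝ≥0∞) := by
      have ht := ENNReal.tendsto_pow_atTop_nhds_zero_of_lt_one hb1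
      exact (ht.eventually_lt_const (show (0:ℝ≥0∞) < ε from ENNReal.coe_pos.2 hε)).exists
    calc (1 : ℝ≥0∞) = am H v₁ (j * K) v₀ + ∑ m ∈ Finset.range (j * K + 1), hitm H v₀ v₁ m :=
        (am_add_hit H hd v₁ (j * K) v₀).symm
    _ ≤ (ε : ℝ≥0∞) + ∑' n : ℕ, hitm H v₀ v₁ n :=
        add_le_add ((hpow j v₀).trans hj.le) (ENNReal.sum_le_tsum _)
    _ = (∑' n : ℕ, hitm H v₀ v₁ n) + ε := add_comm _ _
omit [Fintype V] [DecidableEq V] in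
lemma tail_ne_nil {u v : V} (p : H.Walk u v) (hp : 1 ≤ p.length) : p.support.tail ≠ [] := by
  intro hnil
  have h1 : p.support.tail.length = p.length := by
    rw [List.length_tail, p.length_support]; omega
  rw [hnil] at h1
  simp at h1
  omega

omit [Fintype V] [DecidableEq V] in
lemma tail_dropLast_comm (l : List V) : l.tail.dropLast = l.dropLast.tail := by
  match l with
  | [] => simp
  | [a] => simp
  | a :: b :: t =>
    rw [List.tail_cons, List.dropLast_cons_of_ne_nil (by simp : b :: t ≠ [])]
    simp

omit [Fintype V] [DecidableEq V] in
lemma mid_mem {y : V} (hne : v₀ ≠ v₁) (h : H.Adj v₀ y) (σ' : H.Walk y v₀)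
    (τ₂ : H.Walk v₀ v₁) (hτ : 1 ≤ τ₂.length) :
    v₀ ∈ ((Walk.cons h σ').append τ₂).support.tail.dropLast := by
  rw [Walk.support_append, Walk.support_cons, List.cons_append, List.tail_cons,
    List.dropLast_append_of_ne_nil (tail_ne_nil H τ₂ hτ)]
  exact List.mem_append_left _ σ'.end_mem_support

omit [Fintype V] [DecidableEq V] in
lemma parts_inj {v₀ v₁ : V} (hne : v₀ ≠ v₁) : ∀ (n : ℕ) {x : V} (σ₁ σ₂ : H.Walk x v₀)
    (τ₁ τ₂ : H.Walk v₀ v₁), σ₁.length = n →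
    (∀ y ∈ τ₁.support.tail.dropLast, y ≠ v₀) → 1 ≤ τ₁.length →
    (∀ y ∈ τ₂.support.tail.dropLast, y ≠ v₀) → 1 ≤ τ₂.length →
    σ₁.append τ₁ = σ₂.append τ₂ → σ₁ = σ₂ ∧ τ₁ = τ₂ := by
  intro n
  induction n with
  | zero =>
    intro x σ₁ σ₂ τ₁ τ₂ hlen h1 h1' h2 h2' he
    cases σ₁ with
    | nil =>
      cases σ₂ with
      | nil =>
        rw [Walk.nil_append, Walk.nil_append] at he
        exact ⟨rfl, he⟩
      | cons hadj σ₂' =>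
        exfalso
        rw [Walk.nil_append] at he
        exact h1 v₀ (he ▸ mid_mem H hne hadj σ₂' τ₂ h2') rfl
    | cons hadj σ₁' => simp at hlen
  | succ n ih =>
    intro x σ₁ σ₂ τ₁ τ₂ hlen h1 h1' h2 h2' he
    cases σ₁ with
    | nil => simp at hlen
    | cons hadj σ₁' =>
      cases σ₂ with
      | nil =>
        exfalso
        rw [Walk.nil_append] at he
        exact h2 v₀ (he ▸ mid_mem H hne hadj σ₁' τ₁ h1') rfl
      | cons hadj₂ σ₂' =>
        rw [Walk.cons_append, Walk.cons_append] at he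
        injection he with ha hb hc hp
        subst hb
        rw [heq_iff_eq] at hp
        have hl : σ₁'.length = n := by simpa using hlen
        obtain ⟨hσ, hτ⟩ := ih σ₁' σ₂' τ₁ τ₂ hl h1 h1' h2 h2' hp
        subst hσ
        exact ⟨rfl, hτ⟩

omit [Fintype V] in
lemma parts_surj {v₀ v₁ : V} (hne : v₀ ≠ v₁) : ∀ (n : ℕ) (ω : H.Walk v₀ v₁),
    ω.length = n → v₁ ∉ ω.support.dropLast →
    ∃ (σ : H.Walk v₀ v₀) (τ : H.Walk v₀ v₁), v₁ ∉ σ.support ∧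
      (1 ≤ τ.length ∧ ∀ x ∈ τ.support.tail.dropLast, x ≠ v₀ ∧ x ≠ v₁) ∧ σ.append τ = ω := by
  intro n
  induction n using Nat.strong_induction_on with
  | _ n ih =>
    intro ω hn hcond
    by_cases hret : v₀ ∈ ω.support.tail
    · cases ω with
      | nil => exact absurd rfl hne
      | cons h ω' =>
        rw [Walk.support_cons, List.tail_cons] at hret
        set σ' := ω'.takeUntil v₀ hret with hσ'
        set ρ := ω'.dropUntil v₀ hret with hρ
        have hspec : σ'.append ρ = ω' := ω'.take_spec hret
        have hρlen1 : 1 ≤ ρ.length :=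
          Nat.one_le_iff_ne_zero.2 fun h0 => hne (Walk.eq_of_length_eq_zero h0)
        have htail : ρ.support.tail ≠ [] := tail_ne_nil H ρ hρlen1
        have hsupp : ω'.support.dropLast = σ'.support ++ ρ.support.tail.dropLast := by
          have h1 : (σ'.append ρ).support.dropLast
              = σ'.support ++ ρ.support.tail.dropLast := by
            rw [Walk.support_append, List.dropLast_append_of_ne_nil htail]
          rw [hspec] at h1
          exact h1
        have hω'dl : v₁ ∉ ω'.support.dropLast := by
          intro hmem
          apply hcond
          rw [Walk.support_cons, List.dropLast_cons_of_ne_nil ω'.support_ne_nil]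
          exact List.mem_cons_of_mem _ hmem
        have hv₁σ' : v₁ ∉ σ'.support := fun hmem =>
          hω'dl (hsupp ▸ List.mem_append_left _ hmem)
        have hρdl : v₁ ∉ ρ.support.dropLast := by
          rw [ρ.support_eq_cons, List.dropLast_cons_of_ne_nil htail]
          intro hmem
          rcases List.mem_cons.1 hmem with h' | h'
          · exact hne h'.symm
          · exact hω'dl (hsupp ▸ List.mem_append_right _ h')
        have hρlt : ρ.length < n := by
          have hl1 : ω'.length = σ'.length + ρ.length := by
            rw [← hspec, Walk.length_append]
          have hl2 : (ω'.cons h).length = ω'.length + 1 := by simp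
          omega
        obtain ⟨σ₂, τ, hσ₂, hτ, happ⟩ := ih ρ.length hρlt ρ rfl hρdl
        refine ⟨(Walk.cons h σ').append σ₂, τ, ?_, hτ, ?_⟩
        · rw [Walk.mem_support_append_iff]
          rintro (hmem | hmem)
          · rw [Walk.support_cons] at hmem
            rcases List.mem_cons.1 hmem with h' | h'
            · exact hne h'.symm
            · exact hv₁σ' h'
          · exact hσ₂ hmem
        · rw [← Walk.append_assoc, happ, Walk.cons_append, hspec]
    · refine ⟨.nil, ω, by simp [Ne.symm hne], ⟨?_, fun x hx => ⟨?_, ?_⟩⟩, by simp⟩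
      · exact Nat.one_le_iff_ne_zero.2 fun h0 => hne (Walk.eq_of_length_eq_zero h0)
      · rintro rfl
        exact hret (List.dropLast_subset _ hx)
      · rintro rfl
        apply hcond
        rw [tail_dropLast_comm] at hx
        exact List.tail_subset _ hx
end CRaux

open CRaux SimpleGraph in
/-- In a finite connected graph, the effective conductance `C` between distinct vertices
`v₀, v₁` and the quantity `R = ∑_{ω : v₀ → v₀, v₁ ∉ ω} σ_{v₀}⁻¹ p_H(ω)` are both finite
and satisfy `C * R = 1`. -/
theorem conductance_resistance_product [Fintype V] (H : SimpleGraph V) [H.LocallyFinite]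
    (hH : H.Connected) (v₀ v₁ : V) (hne : v₀ ≠ v₁)
    (C R : ℝ≥0∞)
    (hC : C = ∑' ω : {ω : H.Walk v₀ v₁ //
        1 ≤ ω.length ∧ ∀ x ∈ ω.support.tail.dropLast, x ≠ v₀ ∧ x ≠ v₁},
      (H.degree v₀ : ℝ≥0∞) * wgt H ω.1)
    (hR : R = ∑' ω : {ω : H.Walk v₀ v₀ // v₁ ∉ ω.support},
      ((H.degree v₀ : ℝ≥0∞))⁻¹ * wgt H ω.1) :
    C ≠ ⊤ ∧ R ≠ ⊤ ∧ C * R = 1 := by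
  classical
  have hd : ∀ x : V, H.degree x ≠ 0 := by
    intro x
    have hnt : Nontrivial V := ⟨⟨v₀, v₁, hne⟩⟩
    obtain ⟨y, hy⟩ := exists_ne x
    obtain ⟨pw⟩ := hH.preconnected x y
    cases pw with
    | nil => exact absurd rfl hy
    | cons h p => exact ((H.degree_pos_iff_exists_adj x).2 ⟨_, h⟩).ne'
  set A := ∑' ω : {ω : H.Walk v₀ v₁ //
      1 ≤ ω.length ∧ ∀ x ∈ ω.support.tail.dropLast, x ≠ v₀ ∧ x ≠ v₁}, wgt H ω.1 with hA
  set B := ∑' ω : {ω : H.Walk v₀ v₀ // v₁ ∉ ω.support}, wgt H ω.1 with hB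
  have hCA : C = (H.degree v₀ : ℝ≥0∞) * A := by rw [hC, hA]; exact ENNReal.tsum_mul_left
  have hRB : R = ((H.degree v₀ : ℝ≥0∞))⁻¹ * B := by rw [hR, hB]; exact ENNReal.tsum_mul_left
  let Φ : {ω : H.Walk v₀ v₀ // v₁ ∉ ω.support} × {ω : H.Walk v₀ v₁ //
        1 ≤ ω.length ∧ ∀ x ∈ ω.support.tail.dropLast, x ≠ v₀ ∧ x ≠ v₁}
      → {ω : H.Walk v₀ v₁ // v₁ ∉ ω.support.dropLast} := fun p =>
    ⟨p.1.1.append p.2.1, by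
      rw [Walk.support_append, List.dropLast_append_of_ne_nil (tail_ne_nil H p.2.1 p.2.2.1)]
      intro hmem
      rcases List.mem_append.1 hmem with h' | h'
      · exact p.1.2 h'
      · exact (p.2.2.2 v₁ h').2 rfl⟩
  have hbij : Function.Bijective Φ := by
    constructor
    · rintro ⟨⟨σ₁, hσ₁⟩, ⟨τ₁, hτ₁⟩⟩ ⟨⟨σ₂, hσ₂⟩, ⟨τ₂, hτ₂⟩⟩ h
      have he : σ₁.append τ₁ = σ₂.append τ₂ := congrArg Subtype.val h
      obtain ⟨h1, h2⟩ := parts_inj H hne σ₁.length σ₁ σ₂ τ₁ τ₂ rfl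
        (fun y hy => (hτ₁.2 y hy).1) hτ₁.1 (fun y hy => (hτ₂.2 y hy).1) hτ₂.1 he
      simp [Prod.ext_iff, h1, h2]
    · rintro ⟨ω, hω⟩
      obtain ⟨σ, τ, hσ, hτ, happ⟩ := parts_surj H hne ω.length ω rfl hω
      exact ⟨(⟨σ, hσ⟩, ⟨τ, hτ⟩), Subtype.ext happ⟩
  have hBA : B * A = 1 := by
    have h1 : ∑' (p : {ω : H.Walk v₀ v₀ // v₁ ∉ ω.support} × {ω : H.Walk v₀ v₁ //
          1 ≤ ω.length ∧ ∀ x ∈ ω.support.tail.dropLast, x ≠ v₀ ∧ x ≠ v₁}),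
        wgt H (p.1.1.append p.2.1) = 1 := by
      calc ∑' (p : {ω : H.Walk v₀ v₀ // v₁ ∉ ω.support} × {ω : H.Walk v₀ v₁ //
              1 ≤ ω.length ∧ ∀ x ∈ ω.support.tail.dropLast, x ≠ v₀ ∧ x ≠ v₁}),
            wgt H (p.1.1.append p.2.1)
          = ∑' (ω : {ω : H.Walk v₀ v₁ // v₁ ∉ ω.support.dropLast}), wgt H ω.1 :=
            (Equiv.ofBijective Φ hbij).tsum_eq (fun ω => wgt H ω.1)
      _ = 1 := tsum_first_hit H hd hH v₀ v₁
    rw [hB, hA, ← ENNReal.tsum_mul_right]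
    calc ∑' (a : {ω : H.Walk v₀ v₀ // v₁ ∉ ω.support}),
          wgt H a.1 * ∑' (b : {ω : H.Walk v₀ v₁ //
            1 ≤ ω.length ∧ ∀ x ∈ ω.support.tail.dropLast, x ≠ v₀ ∧ x ≠ v₁}), wgt H b.1
        = ∑' (a : {ω : H.Walk v₀ v₀ // v₁ ∉ ω.support}) (b : {ω : H.Walk v₀ v₁ //
            1 ≤ ω.length ∧ ∀ x ∈ ω.support.tail.dropLast, x ≠ v₀ ∧ x ≠ v₁}),
            wgt H a.1 * wgt H b.1 := tsum_congr fun a => ENNReal.tsum_mul_left.symm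
    _ = ∑' (p : {ω : H.Walk v₀ v₀ // v₁ ∉ ω.support} × {ω : H.Walk v₀ v₁ //
            1 ≤ ω.length ∧ ∀ x ∈ ω.support.tail.dropLast, x ≠ v₀ ∧ x ≠ v₁}),
          wgt H p.1.1 * wgt H p.2.1 :=
        (ENNReal.tsum_prod' (f := fun (p : {ω : H.Walk v₀ v₀ // v₁ ∉ ω.support} ×
          {ω : H.Walk v₀ v₁ // 1 ≤ ω.length ∧ ∀ x ∈ ω.support.tail.dropLast,
            x ≠ v₀ ∧ x ≠ v₁}) => wgt H p.1.1 * wgt H p.2.1)).symm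
    _ = 1 := by rw [← h1]; exact tsum_congr fun p => (wgt_append H p.1.1 p.2.1).symm
  have hAt : A ≠ ⊤ := by
    intro h
    rw [h] at hBA
    rcases eq_or_ne B 0 with h' | h'
    · rw [h', zero_mul] at hBA; exact zero_ne_one hBA
    · rw [ENNReal.mul_top h'] at hBA; exact ENNReal.top_ne_one hBA
  have hBt : B ≠ ⊤ := by
    intro h
    rw [h] at hBA
    rcases eq_or_ne A 0 with h' | h'
    · rw [h', mul_zero] at hBA; exact zero_ne_one hBA
    · rw [ENNReal.top_mul h'] at hBA; exact ENNReal.top_ne_one hBA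
  refine ⟨?_, ?_, ?_⟩
  · rw [hCA]; exact ENNReal.mul_ne_top (ENNReal.natCast_ne_top _) hAt
  · rw [hRB]
    exact ENNReal.mul_ne_top (ENNReal.inv_ne_top.2 (by exact_mod_cast hd v₀)) hBt
  · rw [hCA, hRB, mul_mul_mul_comm,
      ENNReal.mul_inv_cancel (by exact_mod_cast hd v₀) (ENNReal.natCast_ne_top _), one_mul,
      mul_comm A B, hBA]
end

section
/- Let theta > 0, let g = 1/(2 cosh theta), let z be a real number, and define the sequence (w_h)_{h >= 1} by w_1 = z/g and w_h = 1/(1 - g^2 * w_{h-1}) for h >= 2. Suppose sinh(k*theta) - z*sinh((k-1)*theta) is nonzero for k = 1, ..., h. Then w_h = 2 cosh(theta) * ( sinh((h-1)theta) - z*sinh((h-2)theta) ) / ( sinh(h*theta) - z*sinh((h-1)theta) ). -/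
open Real

lemma sinh_step (θ a : ℝ) :
    Real.sinh (a + θ) = 2 * Real.cosh θ * Real.sinh a - Real.sinh (a - θ) := by
  rw [Real.sinh_add, Real.sinh_sub]; ring

/-- Closed-form solution of the causal-triangulation tree recursion
`w_1 = z/g`, `w_h = 1/(1 - g² w_{h-1})` with `g = 1/(2 cosh θ)`:
`w_h = 2 cosh θ (sinh((h-1)θ) - z sinh((h-2)θ)) / (sinh(hθ) - z sinh((h-1)θ))`,
provided the denominators `sinh(kθ) - z sinh((k-1)θ)` are nonzero for `k = 1, …, h`. -/
theorem tree_recursion_solution (θ z : ℝ) (hθ : 0 < θ) (g : ℝ)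
    (hg : g = 1 / (2 * Real.cosh θ))
    (w : ℕ → ℝ) (hw1 : w 1 = z / g)
    (hwrec : ∀ h : ℕ, 2 ≤ h → w h = 1 / (1 - g ^ 2 * w (h - 1)))
    (h : ℕ) (hh : 1 ≤ h)
    (hnz : ∀ k : ℕ, 1 ≤ k → k ≤ h →
      Real.sinh ((k : ℝ) * θ) - z * Real.sinh (((k : ℝ) - 1) * θ) ≠ 0) :
    w h = 2 * Real.cosh θ *
        (Real.sinh (((h : ℝ) - 1) * θ) - z * Real.sinh (((h : ℝ) - 2) * θ)) /
        (Real.sinh ((h : ℝ) * θ) - z * Real.sinh (((h : ℝ) - 1) * θ)) := by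
  have hc : (0:ℝ) < Real.cosh θ := Real.cosh_pos θ
  have hc2 : (2 * Real.cosh θ) ≠ 0 := by positivity
  induction h, hh using Nat.le_induction with
  | base =>
    have hs : Real.sinh ((1:ℝ) * θ) - z * Real.sinh (((1:ℝ) - 1) * θ) ≠ 0 := by
      simpa using hnz 1 le_rfl le_rfl
    have hsθ : Real.sinh θ ≠ 0 := by
      simpa using Real.sinh_ne_zero.mpr hθ.ne'
    rw [hw1, hg]
    norm_num at hs ⊢
    field_simp
  | succ n hn ih =>
    have hnzn : ∀ k : ℕ, 1 ≤ k → k ≤ n →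
        Real.sinh ((k : ℝ) * θ) - z * Real.sinh (((k : ℝ) - 1) * θ) ≠ 0 :=
      fun k hk1 hk2 => hnz k hk1 (hk2.trans (Nat.le_succ n))
    have hDn : Real.sinh ((n : ℝ) * θ) - z * Real.sinh (((n : ℝ) - 1) * θ) ≠ 0 :=
      hnzn n hn le_rfl
    have hDn1 : Real.sinh (((n:ℝ)+1) * θ) - z * Real.sinh ((n : ℝ) * θ) ≠ 0 := by
      have := hnz (n+1) (by omega) le_rfl
      push_cast at this
      simpa using this
    have hrec := hwrec (n+1) (by omega)
    simp only [Nat.add_sub_cancel] at hrec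
    rw [hrec, ih hnzn]
    have e1 : Real.sinh (((n:ℝ)+1) * θ) =
        2 * Real.cosh θ * Real.sinh ((n:ℝ) * θ) - Real.sinh (((n:ℝ)-1) * θ) := by
      have := sinh_step θ ((n:ℝ) * θ)
      rw [show (n:ℝ) * θ + θ = ((n:ℝ)+1)*θ by ring,
        show (n:ℝ) * θ - θ = ((n:ℝ)-1)*θ by ring] at this
      exact this
    have e2 : Real.sinh ((n:ℝ) * θ) =
        2 * Real.cosh θ * Real.sinh (((n:ℝ)-1) * θ) - Real.sinh (((n:ℝ)-2) * θ) := by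
      have := sinh_step θ (((n:ℝ)-1) * θ)
      rw [show ((n:ℝ)-1) * θ + θ = (n:ℝ)*θ by ring,
        show ((n:ℝ)-1) * θ - θ = ((n:ℝ)-2)*θ by ring] at this
      exact this
    push_cast
    rw [hg]
    have key : 1 - (1 / (2 * Real.cosh θ)) ^ 2 *
        (2 * Real.cosh θ *
          (Real.sinh (((n:ℝ) - 1) * θ) - z * Real.sinh (((n:ℝ) - 2) * θ)) /
          (Real.sinh ((n:ℝ) * θ) - z * Real.sinh (((n:ℝ) - 1) * θ))) =
        (Real.sinh (((n:ℝ)+1) * θ) - z * Real.sinh ((n:ℝ) * θ)) /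
          (2 * Real.cosh θ *
            (Real.sinh ((n:ℝ) * θ) - z * Real.sinh (((n:ℝ) - 1) * θ))) := by
      have e2' : Real.sinh (((n:ℝ)-2) * θ) =
          2 * Real.cosh θ * Real.sinh (((n:ℝ)-1) * θ) - Real.sinh ((n:ℝ) * θ) := by
        linarith [e2]
      rw [e1, e2']
      have hDn' : Real.sinh ((n:ℝ) * θ) - Real.sinh (((n:ℝ) - 1) * θ) * z ≠ 0 := by
        rw [mul_comm (Real.sinh _) z]; exact hDn
      field_simp
      ring
    rw [key, one_div_div]
    rw [show ((n:ℝ)+1-1) = (n:ℝ) by ring, show ((n:ℝ)+1-2) = (n:ℝ)-1 by ring]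
end

section
/- For theta > 0, a positive integer h and real z, define W_M(theta, z; h) = 2 cosh(theta) * z * sinh^2(theta) / ( sinh(h*theta) - z*sinh((h-1)*theta) )^2. Fix real numbers Lambda > 0, Y >= 0 and H > 0, and set z(theta) = 1 - Y*theta*Lambda^{-1/2} and h(theta) = floor( H * theta^{-1} * Lambda^{1/2} ). Then the limit as theta tends to 0 from above of W_M(theta, z(theta); h(theta)) equals 2*Lambda / ( Lambda^{1/2} * cosh(H*Lambda^{1/2}) + Y * sinh(H*Lambda^{1/2}) )^2. -/
open Real

private lemma sinh_sub_sinh' (a θ : ℝ) :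
    Real.sinh a - Real.sinh (a - θ) = 2 * Real.sinh (θ / 2) * Real.cosh (a - θ / 2) := by
  have e1 : Real.sinh a = Real.sinh (a - θ / 2) * Real.cosh (θ / 2) +
      Real.cosh (a - θ / 2) * Real.sinh (θ / 2) := by
    rw [← Real.sinh_add]; congr 1; ring
  have e2 : Real.sinh (a - θ) = Real.sinh (a - θ / 2) * Real.cosh (θ / 2) -
      Real.cosh (a - θ / 2) * Real.sinh (θ / 2) := by
    rw [← Real.sinh_sub]; congr 1; ring
  rw [e1, e2]; ring

private lemma tendsto_sinh_div :
    Filter.Tendsto (fun θ : ℝ => Real.sinh θ / θ) (nhdsWithin 0 (Set.Ioi 0)) (nhds 1) := by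
  have h := Real.hasDerivAt_sinh (0 : ℝ)
  rw [hasDerivAt_iff_tendsto_slope] at h
  have h2 := h.mono_left (nhdsWithin_mono 0 (fun x hx => ne_of_gt hx))
  rw [Real.cosh_zero] at h2
  refine h2.congr fun θ => ?_
  simp [slope_def_field, Real.sinh_zero]

/-- Scaling limit of the disk partition function of two-dimensional causal dynamical
triangulations: with `z(θ) = 1 - Yθ/√Λ` and `h(θ) = ⌊H θ⁻¹ √Λ⌋`, as `θ → 0⁺`,
`W_M(θ, z(θ); h(θ)) → 2Λ / (√Λ cosh(H√Λ) + Y sinh(H√Λ))²`. -/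
theorem disk_amplitude_scaling_limit (Λ Y H : ℝ) (hΛ : 0 < Λ) (hY : 0 ≤ Y) (hH : 0 < H)
    (W : ℝ → ℝ → ℕ → ℝ)
    (hW : ∀ (θ z : ℝ) (h : ℕ), W θ z h = 2 * Real.cosh θ * z * Real.sinh θ ^ 2 /
      (Real.sinh ((h : ℝ) * θ) - z * Real.sinh (((h : ℝ) - 1) * θ)) ^ 2) :
    Filter.Tendsto
      (fun θ : ℝ => W θ (1 - Y * θ / Real.sqrt Λ) ⌊H * θ⁻¹ * Real.sqrt Λ⌋₊)
      (nhdsWithin 0 (Set.Ioi 0))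
      (nhds (2 * Λ / (Real.sqrt Λ * Real.cosh (H * Real.sqrt Λ) +
        Y * Real.sinh (H * Real.sqrt Λ)) ^ 2)) := by
  have hs : 0 < Real.sqrt Λ := Real.sqrt_pos.mpr hΛ
  set s := Real.sqrt Λ with hsdef
  set L := H * s with hLdef
  have hL : 0 < L := mul_pos hH hs
  set c := Y / s with hcdef
  have hc0 : 0 ≤ c := div_nonneg hY hs.le
  -- θ itself tends to 0
  have hθ0 : Filter.Tendsto (fun θ : ℝ => θ) (nhdsWithin 0 (Set.Ioi 0)) (nhds 0) :=
    Filter.tendsto_id.mono_left nhdsWithin_le_nhds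
  -- a θ = ⌊H θ⁻¹ s⌋ θ → L
  have ha : Filter.Tendsto (fun θ : ℝ => (⌊H * θ⁻¹ * s⌋₊ : ℝ) * θ)
      (nhdsWithin 0 (Set.Ioi 0)) (nhds L) := by
    apply tendsto_of_tendsto_of_tendsto_of_le_of_le' (g := fun θ : ℝ => L - θ)
      (h := fun _ : ℝ => L)
    · simpa using (tendsto_const_nhds (x := L)).sub hθ0
    · exact tendsto_const_nhds
    · filter_upwards [self_mem_nhdsWithin] with θ hθ
      have hθ' : (0:ℝ) < θ := hθ
      have h1 : H * θ⁻¹ * s - 1 < (⌊H * θ⁻¹ * s⌋₊ : ℝ) := Nat.sub_one_lt_floor _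
      have hx : (H * θ⁻¹ * s) * θ = L := by
        field_simp
        exact hLdef.symm
      nlinarith
    · filter_upwards [self_mem_nhdsWithin] with θ hθ
      have hθ' : (0:ℝ) < θ := hθ
      have h1 : (⌊H * θ⁻¹ * s⌋₊ : ℝ) ≤ H * θ⁻¹ * s := Nat.floor_le (by positivity)
      have hx : (H * θ⁻¹ * s) * θ = L := by
        field_simp
        exact hLdef.symm
      nlinarith
  -- sinh(θ/2)/(θ/2) → 1
  have hhalf : Filter.Tendsto (fun θ : ℝ => θ / 2) (nhdsWithin (0:ℝ) (Set.Ioi 0))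
      (nhdsWithin (0:ℝ) (Set.Ioi 0)) := by
    apply tendsto_nhdsWithin_of_tendsto_nhds_of_eventually_within
    · simpa using hθ0.div_const 2
    · filter_upwards [self_mem_nhdsWithin] with θ hθ
      exact Set.mem_Ioi.mpr (by linarith [Set.mem_Ioi.mp hθ])
  have hslope2 : Filter.Tendsto (fun θ : ℝ => Real.sinh (θ / 2) / (θ / 2))
      (nhdsWithin 0 (Set.Ioi 0)) (nhds 1) := tendsto_sinh_div.comp hhalf
  -- numerator limit
  have hNq : Filter.Tendsto
      (fun θ : ℝ => 2 * Real.cosh θ * (1 - Y * θ / s) * (Real.sinh θ / θ) ^ 2)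
      (nhdsWithin 0 (Set.Ioi 0)) (nhds 2) := by
    have hcosh : Filter.Tendsto (fun θ : ℝ => Real.cosh θ) (nhdsWithin 0 (Set.Ioi 0))
        (nhds 1) := by
      have := (Real.continuous_cosh.tendsto 0).comp hθ0
      simpa [Function.comp_def] using this
    have hz : Filter.Tendsto (fun θ : ℝ => 1 - Y * θ / s) (nhdsWithin 0 (Set.Ioi 0))
        (nhds 1) := by
      have : Filter.Tendsto (fun θ : ℝ => Y * θ / s) (nhdsWithin 0 (Set.Ioi 0)) (nhds 0) := by
        simpa using ((hθ0.const_mul Y).div_const s)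
      simpa using (tendsto_const_nhds (x := (1:ℝ))).sub this
    have := (((tendsto_const_nhds (x := (2:ℝ))).mul hcosh).mul hz).mul
      (tendsto_sinh_div.pow 2)
    simpa using this
  -- denominator limit
  set K : ℝ := Real.cosh L + c * Real.sinh L with hKdef
  have hK : 0 < K := by
    have h1 : (1:ℝ) ≤ Real.cosh L := Real.one_le_cosh L
    have h2 : 0 < Real.sinh L := Real.sinh_pos_iff.mpr hL
    nlinarith
  have hDq : Filter.Tendsto
      (fun θ : ℝ => Real.cosh ((⌊H * θ⁻¹ * s⌋₊ : ℝ) * θ - θ / 2) *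
        (Real.sinh (θ / 2) / (θ / 2)) + c * Real.sinh ((⌊H * θ⁻¹ * s⌋₊ : ℝ) * θ - θ))
      (nhdsWithin 0 (Set.Ioi 0)) (nhds K) := by
    have ham : Filter.Tendsto (fun θ : ℝ => (⌊H * θ⁻¹ * s⌋₊ : ℝ) * θ - θ / 2)
        (nhdsWithin 0 (Set.Ioi 0)) (nhds L) := by
      simpa using ha.sub (hθ0.div_const 2)
    have hbm : Filter.Tendsto (fun θ : ℝ => (⌊H * θ⁻¹ * s⌋₊ : ℝ) * θ - θ)
        (nhdsWithin 0 (Set.Ioi 0)) (nhds L) := by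
      simpa using ha.sub hθ0
    have h1 := ((Real.continuous_cosh.tendsto L).comp ham).mul hslope2
    have h2 := (tendsto_const_nhds (x := c)).mul ((Real.continuous_sinh.tendsto L).comp hbm)
    have := h1.add h2
    simpa [hKdef] using this
  -- combine
  have hKne : K ^ 2 ≠ 0 := pow_ne_zero 2 (ne_of_gt hK)
  have hmain := hNq.div (hDq.pow 2) hKne
  -- the limit value is the claimed one
  have hval : (2 : ℝ) / K ^ 2 = 2 * Λ / (s * Real.cosh L + Y * Real.sinh L) ^ 2 := by
    have hs2 : s * s = Λ := Real.mul_self_sqrt hΛ.le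
    have hKs : s * K = s * Real.cosh L + Y * Real.sinh L := by
      rw [hKdef, hcdef]
      field_simp
    rw [← hKs, ← hs2]
    rw [mul_pow]
    rw [div_mul_eq_div_div_swap ]
    field_simp
  rw [hval] at hmain
  -- eventual equality of the two expressions
  refine hmain.congr' ?_
  filter_upwards [self_mem_nhdsWithin] with θ hθ
  have hθ' : (0:ℝ) < θ := hθ
  have hθne : θ ≠ 0 := ne_of_gt hθ'
  set n : ℕ := ⌊H * θ⁻¹ * s⌋₊ with hn
  set a : ℝ := (n : ℝ) * θ with hadef
  have hb : ((n : ℝ) - 1) * θ = a - θ := by rw [hadef]; ring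
  have hden : Real.sinh ((n : ℝ) * θ) - (1 - Y * θ / s) * Real.sinh (((n : ℝ) - 1) * θ)
      = θ * (Real.cosh (a - θ / 2) * (Real.sinh (θ / 2) / (θ / 2)) +
        c * Real.sinh (a - θ)) := by
    rw [hb, ← hadef]
    have hid := sinh_sub_sinh' a θ
    have h2 : θ * (Real.sinh (θ / 2) / (θ / 2)) = 2 * Real.sinh (θ / 2) := by
      field_simp
    have h3 : Real.sinh a - (1 - Y * θ / s) * Real.sinh (a - θ)
        = (Real.sinh a - Real.sinh (a - θ)) + (Y / s) * θ * Real.sinh (a - θ) := by ring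
    rw [h3, hid, ← hcdef]
    have h4 : θ * (Real.cosh (a - θ / 2) * (Real.sinh (θ / 2) / (θ / 2)) +
        c * Real.sinh (a - θ)) = (θ * (Real.sinh (θ / 2) / (θ / 2))) * Real.cosh (a - θ / 2)
        + c * θ * Real.sinh (a - θ) := by ring
    rw [h4, h2]
  have hnum : 2 * Real.cosh θ * (1 - Y * θ / s) * Real.sinh θ ^ 2
      = θ ^ 2 * (2 * Real.cosh θ * (1 - Y * θ / s) * (Real.sinh θ / θ) ^ 2) := by
    field_simp
  rw [hW, hden, hnum, Pi.div_apply, mul_pow]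
  rw [mul_div_mul_left _ _ (pow_ne_zero 2 hθne)]
end

section
/- Let theta > 0, let h >= 4 be an integer, and let x and y be real numbers. Define w_{h-1}(y) = 2 cosh(theta) * ( sinh((h-2)theta) - y*sinh((h-3)theta) ) / ( sinh((h-1)theta) - y*sinh((h-2)theta) ) and g = 1/(2 cosh theta). Then, wherever the denominators sinh((h-1)theta) - y*sinh((h-2)theta) and sinh((h-1)theta) - (x+y)*sinh((h-2)theta) + x*y*sinh((h-3)theta) are nonzero, y * (d/dy) [ 1/(1 - x*g*w_{h-1}(y)) ] = x*y*sinh^2(theta) / ( sinh((h-1)theta) - (x+y)*sinh((h-2)theta) + x*y*sinh((h-3)theta) )^2. -/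
open Real

lemma sinh_sq_sub (a d : ℝ) :
    Real.sinh a ^ 2 - Real.sinh (a + d) * Real.sinh (a - d) = Real.sinh d ^ 2 := by
  rw [Real.sinh_add, Real.sinh_sub]
  have h1 := Real.cosh_sq a
  have h2 := Real.cosh_sq d
  nlinarith [h1, h2]

/-- Closed form of the annulus (cylinder) amplitude of two-dimensional causal dynamical
triangulations: with `g = 1/(2 cosh θ)` and
`w(t) = 2 cosh θ (sinh((h-2)θ) - t sinh((h-3)θ)) / (sinh((h-1)θ) - t sinh((h-2)θ))`,
wherever the denominators are nonzero,
`y ∂/∂y [1/(1 - x g w(y))]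
  = x y sinh²θ / (sinh((h-1)θ) - (x+y) sinh((h-2)θ) + x y sinh((h-3)θ))²`. -/
theorem annulus_amplitude_closed_form (θ : ℝ) (hθ : 0 < θ) (h : ℕ) (hh : 4 ≤ h)
    (x y : ℝ) (g : ℝ) (hg : g = 1 / (2 * Real.cosh θ))
    (w : ℝ → ℝ)
    (hw : ∀ t : ℝ, w t = 2 * Real.cosh θ *
      (Real.sinh (((h : ℝ) - 2) * θ) - t * Real.sinh (((h : ℝ) - 3) * θ)) /
      (Real.sinh (((h : ℝ) - 1) * θ) - t * Real.sinh (((h : ℝ) - 2) * θ)))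
    (hD1 : Real.sinh (((h : ℝ) - 1) * θ) - y * Real.sinh (((h : ℝ) - 2) * θ) ≠ 0)
    (hD2 : Real.sinh (((h : ℝ) - 1) * θ) - (x + y) * Real.sinh (((h : ℝ) - 2) * θ)
        + x * y * Real.sinh (((h : ℝ) - 3) * θ) ≠ 0) :
    y * deriv (fun t : ℝ => 1 / (1 - x * g * w t)) y =
      x * y * Real.sinh θ ^ 2 /
        (Real.sinh (((h : ℝ) - 1) * θ) - (x + y) * Real.sinh (((h : ℝ) - 2) * θ)
          + x * y * Real.sinh (((h : ℝ) - 3) * θ)) ^ 2 := by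
  set S1 := Real.sinh (((h : ℝ) - 1) * θ) with hS1
  set S2 := Real.sinh (((h : ℝ) - 2) * θ) with hS2
  set S3 := Real.sinh (((h : ℝ) - 3) * θ) with hS3
  have hcosh : Real.cosh θ ≠ 0 := ne_of_gt (Real.cosh_pos θ)
  -- key identity
  have hkey : S2 ^ 2 - S1 * S3 = Real.sinh θ ^ 2 := by
    have e1 : ((h : ℝ) - 1) * θ = ((h : ℝ) - 2) * θ + θ := by ring
    have e2 : ((h : ℝ) - 3) * θ = ((h : ℝ) - 2) * θ - θ := by ring
    rw [hS1, hS2, hS3, e1, e2]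
    exact sinh_sq_sub _ _
  -- alternative form f
  set f : ℝ → ℝ := fun t => (S1 - t * S2) / (S1 - (x + t) * S2 + x * t * S3) with hf
  -- local equality
  have hEq : (fun t : ℝ => 1 / (1 - x * g * w t)) =ᶠ[nhds y] f := by
    have hcont : Continuous (fun t : ℝ => S1 - t * S2) := by continuity
    have hopen : IsOpen {t : ℝ | S1 - t * S2 ≠ 0} :=
      isOpen_ne.preimage hcont
    filter_upwards [hopen.mem_nhds hD1] with t ht
    have ht : S1 - t * S2 ≠ 0 := ht
    have hone : 1 - x * g * w t = (S1 - (x + t) * S2 + x * t * S3) / (S1 - t * S2) := by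
      rw [hw t, hg]
      have key : x * (1 / (2 * Real.cosh θ)) * (2 * Real.cosh θ * (S2 - t * S3) / (S1 - t * S2))
          = x * (S2 - t * S3) / (S1 - t * S2) := by
        field_simp
      rw [key, eq_div_iff ht, sub_mul, div_mul_cancel₀ _ ht]
      ring
    rw [hone, one_div_div]
  rw [hEq.deriv_eq]
  -- derivative of f
  have hN : HasDerivAt (fun t : ℝ => S1 - t * S2) (-S2) y := by
    exact ((hasDerivAt_const y S1).sub ((hasDerivAt_id y).mul_const S2)).congr_deriv (by ring)
  have hD : HasDerivAt (fun t : ℝ => S1 - (x + t) * S2 + x * t * S3) (-S2 + x * S3) y := by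
    have h1 : HasDerivAt (fun t : ℝ => (x + t) * S2) S2 y := by
      simpa using ((hasDerivAt_id y).const_add x).mul_const S2
    have h2 : HasDerivAt (fun t : ℝ => x * t * S3) (x * S3) y := by
      simpa using ((hasDerivAt_id y).const_mul x).mul_const S3
    exact (((hasDerivAt_const y S1).sub h1).add h2).congr_deriv (by ring)
  have hdf : HasDerivAt f
      ((-S2 * (S1 - (x + y) * S2 + x * y * S3) - (S1 - y * S2) * (-S2 + x * S3)) /
        (S1 - (x + y) * S2 + x * y * S3) ^ 2) y := hN.div hD hD2
  rw [hdf.deriv]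
  rw [← mul_div_assoc, div_eq_div_iff (pow_ne_zero 2 hD2) (pow_ne_zero 2 hD2)]
  linear_combination x * y * (S1 - (x + y) * S2 + x * y * S3) ^ 2 * hkey
end
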